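/- arXiv:1603.04964 — 3 statements merged into one kernel-verified Lean document; each statement's English description precedes it below -/
import Mathlib

section
/- Suppose κ satisfies Assumption 1 and Hypothesis (H) holds. If a randomized policy f*_{k:N} and estimates x̂*_{k:N} are jointly optimal, i.e., C(f*_{k:N}, x̂*_{k:N}) ≤ C(f_{k:N}, x̂_{k:N}) for every randomized policy f_{k:N} and every x̂_{k:N} ∈ S^(N−k+1), then f*_{k:N} is non-degenerate: q*_j > 0 for every j ∈ {k, …, N}. -/
open MeasureTheory Filter
open scoped ENNReal NNReal Topology

noncomputable section

/-- The state space `S = ℝ² × [0, 2π)`. -/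
abbrev S : Type := {x : ℝ × ℝ × ℝ // x.2.2 ∈ Set.Ico (0 : ℝ) (2 * Real.pi)}

/-- The metric `d` on `S`. -/
noncomputable def dS (x y : S) : ℝ :=
  Real.sqrt ((x.1.1 - y.1.1) ^ 2 + (x.1.2.1 - y.1.2.1) ^ 2
    + 2 * (Real.cos x.1.2.2 - Real.cos y.1.2.2) ^ 2
    + 2 * (Real.sin x.1.2.2 - Real.sin y.1.2.2) ^ 2)

/-- The initial state `x₀ = (0,0,0)`. -/
def origin : S := ⟨(0, 0, 0), ⟨le_rfl, by positivity⟩⟩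

/-- Embedding of `S` into `ℝ⁴` realizing `dS` as the Euclidean distance. -/
noncomputable def eS (x : S) : EuclideanSpace ℝ (Fin 4) :=
  WithLp.toLp 2 ![x.1.1, x.1.2.1, Real.sqrt 2 * Real.cos x.1.2.2, Real.sqrt 2 * Real.sin x.1.2.2]

lemma dS_eq_dist (x y : S) : dS x y = dist (eS x) (eS y) := by
  rw [EuclideanSpace.dist_eq]
  unfold dS eS
  congr 1
  simp [Fin.sum_univ_four, Real.dist_eq, sq_abs]
  have h2 : Real.sqrt 2 ^ 2 = 2 := Real.sq_sqrt (by norm_num)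
  ring_nf
  simp only [h2]
  ring

lemma dS_self (x : S) : dS x x = 0 := by rw [dS_eq_dist]; exact dist_self _

lemma dS_comm (x y : S) : dS x y = dS y x := by
  rw [dS_eq_dist, dS_eq_dist]; exact dist_comm _ _

lemma dS_triangle (x y z : S) : dS x z ≤ dS x y + dS y z := by
  rw [dS_eq_dist, dS_eq_dist, dS_eq_dist]; exact dist_triangle _ _ _

lemma dS_nonneg (x y : S) : 0 ≤ dS x y := by rw [dS_eq_dist]; exact dist_nonneg

lemma abs_dS_sub_dS_le (x y c : S) : |dS x c - dS y c| ≤ dS y x := by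
  rw [dS_eq_dist, dS_eq_dist, dS_eq_dist]; rw [dist_comm (eS y) (eS x)]; exact abs_dist_sub_le (eS x) (eS y) (eS c)

lemma continuous_dS_left (c : S) : Continuous fun y : S => dS c y := by
  unfold dS; fun_prop

lemma continuous_dS_right (c : S) : Continuous fun y : S => dS y c := by
  unfold dS; fun_prop


/-- `κ` is a Markov kernel on `S`. -/
def IsMarkov (κ : S → Measure S) : Prop :=
  (∀ x, IsProbabilityMeasure (κ x)) ∧
    ∀ A : Set S, MeasurableSet A → Measurable fun x => κ x A

/-- Continuity of a real-valued function with respect to the metric `dS`. -/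
def DContinuous (g : S → ℝ) : Prop :=
  ∀ x : S, ∀ ε : ℝ, 0 < ε → ∃ δ : ℝ, 0 < δ ∧ ∀ y : S, dS x y < δ → |g y - g x| < ε

/-- Openness with respect to the metric `dS`. -/
def DOpen (O : Set S) : Prop :=
  ∀ x ∈ O, ∃ δ : ℝ, 0 < δ ∧ ∀ y : S, dS x y < δ → y ∈ O

/-- Assumption 1 on the kernel `κ`. -/
def Assumption1 (κ : S → Measure S) : Prop :=
  (∀ A : Set S, MeasurableSet A → DContinuous fun x => (κ x A).toReal) ∧
    ∀ O : Set S, DOpen O → O.Nonempty → ∀ x : S, 0 < κ x O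

lemma dcont_const (c : ℝ) : DContinuous fun _ => c := by
  intro x ε hε; exact ⟨1, one_pos, fun y _ => by simpa using hε⟩

lemma dcont_add {f g : S → ℝ} (hf : DContinuous f) (hg : DContinuous g) :
    DContinuous fun x => f x + g x := by
  intro x ε hε
  obtain ⟨δ1, hδ1, h1⟩ := hf x (ε / 2) (by positivity)
  obtain ⟨δ2, hδ2, h2⟩ := hg x (ε / 2) (by positivity)
  refine ⟨min δ1 δ2, lt_min hδ1 hδ2, fun y hy => ?_⟩
  have e1 := h1 y (lt_of_lt_of_le hy (min_le_left _ _))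
  have e2 := h2 y (lt_of_lt_of_le hy (min_le_right _ _))
  calc |f y + g y - (f x + g x)| = |(f y - f x) + (g y - g x)| := by ring_nf
    _ ≤ |f y - f x| + |g y - g x| := abs_add_le _ _
    _ < ε / 2 + ε / 2 := add_lt_add e1 e2
    _ = ε := by ring

lemma dcont_min {f g : S → ℝ} (hf : DContinuous f) (hg : DContinuous g) :
    DContinuous fun x => min (f x) (g x) := by
  intro x ε hε
  obtain ⟨δ1, hδ1, h1⟩ := hf x ε hε
  obtain ⟨δ2, hδ2, h2⟩ := hg x ε hε
  refine ⟨min δ1 δ2, lt_min hδ1 hδ2, fun y hy => ?_⟩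
  have e1 := h1 y (lt_of_lt_of_le hy (min_le_left _ _))
  have e2 := h2 y (lt_of_lt_of_le hy (min_le_right _ _))
  exact lt_of_le_of_lt (abs_min_sub_min_le_max _ _ _ _) (max_lt e1 e2)

lemma dcont_const_mul {f : S → ℝ} (c : ℝ) (hf : DContinuous f) :
    DContinuous fun x => c * f x := by
  intro x ε hε
  obtain ⟨δ, hδ, h⟩ := hf x (ε / (|c| + 1)) (by positivity)
  refine ⟨δ, hδ, fun y hy => ?_⟩
  have e := h y hy
  have hc : (0:ℝ) ≤ |c| := abs_nonneg c
  calc |c * f y - c * f x| = |c| * |f y - f x| := by rw [← abs_mul]; ring_nf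
    _ ≤ |c| * (ε / (|c| + 1)) := by
        exact mul_le_mul_of_nonneg_left e.le hc
    _ < ε := by
        rw [div_eq_inv_mul, ← mul_assoc]
        have : |c| * (|c| + 1)⁻¹ < 1 := by
          rw [mul_inv_lt_iff₀ (by positivity), one_mul]; linarith
        nlinarith
  
lemma dcont_sum {ι : Type*} (s : Finset ι) (f : ι → S → ℝ)
    (h : ∀ i ∈ s, DContinuous (f i)) : DContinuous fun x => ∑ i ∈ s, f i x := by
  classical
  induction s using Finset.induction with
  | empty => simpa using dcont_const 0
  | insert a t hne ih =>
    simp only [Finset.sum_insert hne]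
    exact dcont_add (h a (Finset.mem_insert_self a t))
      (ih fun i hi => h i (Finset.mem_insert_of_mem hi))

lemma dcont_lt_ball {f g : S → ℝ} (hf : DContinuous f) (hg : DContinuous g) {x : S}
    (h : f x < g x) : ∃ δ : ℝ, 0 < δ ∧ ∀ y, dS x y < δ → f y < g y := by
  obtain ⟨δ1, hδ1, h1⟩ := hf x ((g x - f x) / 2) (by linarith)
  obtain ⟨δ2, hδ2, h2⟩ := hg x ((g x - f x) / 2) (by linarith)
  refine ⟨min δ1 δ2, lt_min hδ1 hδ2, fun y hy => ?_⟩
  have e1 := abs_lt.mp (h1 y (lt_of_lt_of_le hy (min_le_left _ _)))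
  have e2 := abs_lt.mp (h2 y (lt_of_lt_of_le hy (min_le_right _ _)))
  linarith [e1.2, e2.1]

lemma dopen_lt {f g : S → ℝ} (hf : DContinuous f) (hg : DContinuous g) :
    DOpen {x | f x < g x} := fun x hx => dcont_lt_ball hf hg hx

lemma dopen_ball (c : S) (r : ℝ) : DOpen {y | dS c y < r} := by
  intro u hu
  refine ⟨r - dS c u, by simpa using hu, fun y hy => ?_⟩
  have := dS_triangle c u y
  simp only [Set.mem_setOf_eq] at hu ⊢
  linarith

instance : BorelSpace S := Subtype.borelSpace _

lemma dS_measurableSet_ball (c : S) (r : ℝ) : MeasurableSet {y | dS c y < r} := by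
  have : {y | dS c y < r} = (fun y => dS c y) ⁻¹' Set.Iio r := rfl
  rw [this]
  exact ((continuous_dS_left c).measurable) measurableSet_Iio

lemma dcont_dS_sq (c : S) : DContinuous fun x => dS x c ^ 2 := by
  intro x ε hε
  have hxc := dS_nonneg x c
  refine ⟨min 1 (ε / (2 * dS x c + 1)), lt_min one_pos (div_pos hε (by linarith)),
    fun y hy => ?_⟩
  have h1 : |dS y c - dS x c| ≤ dS x y := abs_dS_sub_dS_le y x c
  have hd1 : dS x y < 1 := lt_of_lt_of_le hy (min_le_left _ _)
  have hd2 : dS x y < ε / (2 * dS x c + 1) := lt_of_lt_of_le hy (min_le_right _ _)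
  have hyc : dS y c ≤ dS x c + 1 := by linarith [(abs_le.mp h1).2]
  have hycn := dS_nonneg y c
  have key : |dS y c ^ 2 - dS x c ^ 2| = |dS y c - dS x c| * (dS y c + dS x c) := by
    rw [show dS y c ^ 2 - dS x c ^ 2 = (dS y c - dS x c) * (dS y c + dS x c) by ring,
      abs_mul, abs_of_nonneg (show (0:ℝ) ≤ dS y c + dS x c by linarith)]
  rw [key]
  have h2 : |dS y c - dS x c| * (dS y c + dS x c) ≤ dS x y * (2 * dS x c + 1) :=
    mul_le_mul h1 (by linarith) (by linarith) (dS_nonneg x y)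
  calc |dS y c - dS x c| * (dS y c + dS x c) ≤ dS x y * (2 * dS x c + 1) := h2
    _ < (ε / (2 * dS x c + 1)) * (2 * dS x c + 1) :=
        mul_lt_mul_of_pos_right hd2 (by linarith)
    _ = ε := by field_simp

/-- Auxiliary downward value recursion; the first argument is the number
`N + 1 - j` of remaining stages. -/
noncomputable def Jaux (κ : S → Measure S) (c' : ℕ → ℝ) (xhat : ℕ → S) :
    ℕ → ℕ → S → ℝ≥0∞
  | 0, _, _ => 0
  | m + 1, j, x =>
      min (ENNReal.ofReal (dS x (xhat j) ^ 2) + ∫⁻ y, Jaux κ c' xhat m (j + 1) y ∂(κ x))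
        (ENNReal.ofReal (c' j))

/-- The optimal cost-to-go `J*_j(x, x̂_{j:N})`. -/
noncomputable def JJ (κ : S → Measure S) (c' : ℕ → ℝ) (N : ℕ) (xhat : ℕ → S)
    (j : ℕ) (x : S) : ℝ≥0∞ :=
  Jaux κ c' xhat (N + 1 - j) j x

/-- `G_j(x, x̂_{j:N}) = ∫ J*_j(y, x̂_{j:N}) κ(x)(dy)`. -/
noncomputable def Gj (κ : S → Measure S) (c' : ℕ → ℝ) (N : ℕ) (xhat : ℕ → S)
    (j : ℕ) (x : S) : ℝ≥0∞ :=
  ∫⁻ y, JJ κ c' N xhat j y ∂(κ x)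

/-- `G(x̂_{k:N}) = G_k(x₀, x̂_{k:N})`. -/
noncomputable def Gtot (κ : S → Measure S) (c' : ℕ → ℝ) (k N : ℕ) (xhat : ℕ → S) : ℝ≥0∞ :=
  Gj κ c' N xhat k origin

lemma measurable_kernel {κ : S → Measure S} (hκ : IsMarkov κ) : Measurable κ :=
  Measure.measurable_of_measurable_coe κ hκ.2

/-- Package `κ` as a Mathlib kernel. -/
noncomputable def toK (κ : S → Measure S) (hκ : IsMarkov κ) : ProbabilityTheory.Kernel S S :=
  ⟨κ, measurable_kernel hκ⟩

lemma measurable_lintegral_kernel {κ : S → Measure S} (hκ : IsMarkov κ) {g : S → ℝ≥0∞}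
    (hg : Measurable g) : Measurable fun x => ∫⁻ y, g y ∂κ x := by
  haveI : ProbabilityTheory.IsMarkovKernel (toK κ hκ) := ⟨fun a => hκ.1 a⟩
  exact Measurable.lintegral_kernel_prod_right' (κ := toK κ hκ) (f := fun p : S × S => g p.2)
    (hg.comp measurable_snd)

lemma Jaux_le (κ : S → Measure S) (c' : ℕ → ℝ) (xhat : ℕ → S) :
    ∀ m j x, Jaux κ c' xhat m j x ≤ ENNReal.ofReal (max (c' j) 0)
  | 0, _, _ => zero_le
  | m + 1, j, x => le_trans (min_le_right _ _) (ENNReal.ofReal_le_ofReal (le_max_left _ _))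

lemma Jaux_ne_top (κ : S → Measure S) (c' : ℕ → ℝ) (xhat : ℕ → S) (m j : ℕ) (x : S) :
    Jaux κ c' xhat m j x ≠ ∞ :=
  ne_top_of_le_ne_top ENNReal.ofReal_ne_top (Jaux_le κ c' xhat m j x)

lemma Jaux_measurable {κ : S → Measure S} (hκ : IsMarkov κ) (c' : ℕ → ℝ) (xhat : ℕ → S) :
    ∀ m j, Measurable (Jaux κ c' xhat m j)
  | 0, _ => measurable_const
  | m + 1, j => by
    have h1 : Measurable fun x => ENNReal.ofReal (dS x (xhat j) ^ 2) :=
      (((continuous_dS_right (xhat j)).pow 2).measurable).ennreal_ofReal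
    have h2 : Measurable fun x => ∫⁻ y, Jaux κ c' xhat m (j + 1) y ∂κ x :=
      measurable_lintegral_kernel hκ (Jaux_measurable hκ c' xhat m (j + 1))
    exact Measurable.min (h1.add h2) measurable_const

lemma lintegral_Jaux_le {κ : S → Measure S} (hκ : IsMarkov κ) (c' : ℕ → ℝ) (xhat : ℕ → S)
    (m j : ℕ) (x : S) :
    ∫⁻ y, Jaux κ c' xhat m j y ∂κ x ≤ ENNReal.ofReal (max (c' j) 0) := by
  haveI := hκ.1 x
  calc ∫⁻ y, Jaux κ c' xhat m j y ∂κ x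
      ≤ ∫⁻ _, ENNReal.ofReal (max (c' j) 0) ∂κ x := lintegral_mono (Jaux_le κ c' xhat m j)
    _ = ENNReal.ofReal (max (c' j) 0) := by rw [lintegral_const, measure_univ, mul_one]

lemma Jaux_congr (κ : S → Measure S) (c' : ℕ → ℝ) :
    ∀ (m j : ℕ) (xh1 xh2 : ℕ → S), (∀ i, j ≤ i → xh1 i = xh2 i) →
      ∀ x, Jaux κ c' xh1 m j x = Jaux κ c' xh2 m j x
  | 0, _, _, _, _, _ => rfl
  | m + 1, j, xh1, xh2, h, x => by
    simp only [Jaux]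
    rw [h j le_rfl]
    congr 2
    exact lintegral_congr fun y =>
      Jaux_congr κ c' m (j + 1) xh1 xh2 (fun i hi => h i (by omega)) y

lemma JJ_le (κ : S → Measure S) (c' : ℕ → ℝ) (N : ℕ) (xhat : ℕ → S) (j : ℕ) (x : S) :
    JJ κ c' N xhat j x ≤ ENNReal.ofReal (max (c' j) 0) :=
  Jaux_le κ c' xhat _ j x

lemma JJ_ne_top (κ : S → Measure S) (c' : ℕ → ℝ) (N : ℕ) (xhat : ℕ → S) (j : ℕ) (x : S) :
    JJ κ c' N xhat j x ≠ ∞ :=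
  Jaux_ne_top κ c' xhat _ j x

lemma JJ_measurable {κ : S → Measure S} (hκ : IsMarkov κ) (c' : ℕ → ℝ) (N : ℕ)
    (xhat : ℕ → S) (j : ℕ) : Measurable (JJ κ c' N xhat j) :=
  Jaux_measurable hκ c' xhat _ j

lemma lintegral_JJ_le {κ : S → Measure S} (hκ : IsMarkov κ) (c' : ℕ → ℝ) (N : ℕ)
    (xhat : ℕ → S) (j : ℕ) (x : S) :
    ∫⁻ y, JJ κ c' N xhat j y ∂κ x ≤ ENNReal.ofReal (max (c' j) 0) :=
  lintegral_Jaux_le hκ c' xhat _ j x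

lemma lintegral_JJ_ne_top {κ : S → Measure S} (hκ : IsMarkov κ) (c' : ℕ → ℝ) (N : ℕ)
    (xhat : ℕ → S) (j : ℕ) (x : S) :
    ∫⁻ y, JJ κ c' N xhat j y ∂κ x ≠ ∞ :=
  ne_top_of_le_ne_top ENNReal.ofReal_ne_top (lintegral_JJ_le hκ c' N xhat j x)

lemma JJ_succ (κ : S → Measure S) (c' : ℕ → ℝ) {N j : ℕ} (xhat : ℕ → S) (hjN : j ≤ N)
    (x : S) :
    JJ κ c' N xhat j x =
      min (ENNReal.ofReal (dS x (xhat j) ^ 2) + ∫⁻ y, JJ κ c' N xhat (j + 1) y ∂κ x)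
        (ENNReal.ofReal (c' j)) := by
  have h1 : N + 1 - j = (N - j) + 1 := by omega
  have h2 : N + 1 - (j + 1) = N - j := by omega
  unfold JJ
  rw [h1, h2]
  rfl

lemma JJ_congr (κ : S → Measure S) (c' : ℕ → ℝ) (N : ℕ) (xh1 xh2 : ℕ → S) (j : ℕ)
    (h : ∀ i, j ≤ i → xh1 i = xh2 i) (x : S) :
    JJ κ c' N xh1 j x = JJ κ c' N xh2 j x :=
  Jaux_congr κ c' _ j xh1 xh2 h x

/-- Setwise continuity of the kernel upgrades to continuity of integrals of
bounded measurable functions. -/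
lemma dcont_kernel_lintegral {κ : S → Measure S} (hκ : IsMarkov κ) (hA : Assumption1 κ)
    {g : S → ℝ≥0∞} (hg : Measurable g) (C : ℝ) (hgC : ∀ y, g y ≤ ENNReal.ofReal C) :
    DContinuous fun x => (∫⁻ y, g y ∂κ x).toReal := by
  classical
  set C' : ℝ := max C 0 with hC'def
  have hC'0 : (0:ℝ) ≤ C' := le_max_right _ _
  have hg' : ∀ y, g y ≤ ENNReal.ofReal C' := fun y =>
    le_trans (hgC y) (ENNReal.ofReal_le_ofReal (le_max_left _ _))
  have hgfin : ∀ y, g y ≠ ∞ := fun y => ne_top_of_le_ne_top ENNReal.ofReal_ne_top (hg' y)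
  intro x ε hε
  set n : ℕ := ⌈4 / ε⌉₊ + 1 with hndef
  have hnpos : (0:ℝ) < n := by positivity
  have hnne : (n:ℝ≥0∞) ≠ 0 := by
    simp [hndef]
  have hn4 : 4 / ε < (n:ℝ) := by
    calc (4:ℝ) / ε ≤ ⌈4 / ε⌉₊ := Nat.le_ceil _
      _ < n := by exact_mod_cast Nat.lt_succ_self _
  have hn2 : 2 / (n:ℝ) < ε / 2 := by
    rw [div_lt_div_iff₀ hnpos (by norm_num)]
    have h4 : 4 < (n:ℝ) * ε := by
      have := (div_lt_iff₀ hε).mp hn4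
      linarith
    linarith
  set M : ℕ := ⌈C' * n⌉₊ with hMdef
  set A : ℕ → Set S := fun i => {y | (i:ℝ) ≤ n * (g y).toReal} with hAdef
  have hAmeas : ∀ i, MeasurableSet (A i) := fun i =>
    measurableSet_le measurable_const (measurable_const.mul hg.ennreal_toReal)
  set h : S → ℝ := fun x' => ∑ i ∈ Finset.Icc 1 M, (n:ℝ)⁻¹ * (κ x' (A i)).toReal with hhdef
  have hdc : DContinuous h :=
    dcont_sum _ _ fun i _ => dcont_const_mul _ (hA.1 (A i) (hAmeas i))
  set F : S → ℕ := fun y => ⌊(n:ℝ) * (g y).toReal⌋₊ with hFdef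
  have hfilter : ∀ y, Finset.filter (fun i => y ∈ A i) (Finset.Icc 1 M) =
      Finset.Icc 1 (F y) := by
    intro y
    ext i
    simp only [Finset.mem_filter, Finset.mem_Icc, Set.mem_setOf_eq, A, F]
    constructor
    · rintro ⟨⟨h1i, _⟩, hle⟩
      exact ⟨h1i, Nat.le_floor hle⟩
    · rintro ⟨h1i, hiF⟩
      have h0 : (0:ℝ) ≤ n * (g y).toReal := by positivity
      have hiR : (i:ℝ) ≤ n * (g y).toReal :=
        le_trans (by exact_mod_cast Nat.cast_le.mpr hiF) (Nat.floor_le h0)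
      refine ⟨⟨h1i, ?_⟩, hiR⟩
      have ht : (g y).toReal ≤ C' := by
        have h2 := ENNReal.toReal_mono ENNReal.ofReal_ne_top (hg' y)
        rwa [ENNReal.toReal_ofReal hC'0] at h2
      have hFM : ((⌊(n:ℝ) * (g y).toReal⌋₊ : ℕ) : ℝ) ≤ (M:ℝ) := by
        calc ((⌊(n:ℝ) * (g y).toReal⌋₊ : ℕ) : ℝ) ≤ n * (g y).toReal := Nat.floor_le h0
          _ ≤ C' * n := by nlinarith
          _ ≤ M := Nat.le_ceil _
      exact le_trans hiF (by exact_mod_cast hFM)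
  set sE : S → ℝ≥0∞ :=
    fun y => ∑ i ∈ Finset.Icc 1 M, (A i).indicator (fun _ => (n:ℝ≥0∞)⁻¹) y with hsEdef
  have hsE_eq : ∀ y, sE y = (F y : ℝ≥0∞) * (n:ℝ≥0∞)⁻¹ := by
    intro y
    simp only [sE, Set.indicator_apply]
    rw [← Finset.sum_filter, hfilter y, Finset.sum_const, Nat.card_Icc]
    simp [nsmul_eq_mul]
  have hcast : ∀ p : ℕ, (p : ℝ≥0∞) * (n:ℝ≥0∞)⁻¹ = ENNReal.ofReal ((p:ℝ) / n) := by
    intro p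
    rw [ENNReal.ofReal_div_of_pos hnpos, ENNReal.ofReal_natCast, ENNReal.ofReal_natCast]
    rfl
  have hsE_le : ∀ y, sE y ≤ g y := by
    intro y
    rw [hsE_eq y, hcast]
    conv_rhs => rw [← ENNReal.ofReal_toReal (hgfin y)]
    apply ENNReal.ofReal_le_ofReal
    rw [div_le_iff₀ hnpos]
    calc ((F y : ℕ) : ℝ) ≤ n * (g y).toReal := Nat.floor_le (by positivity)
      _ = (g y).toReal * n := by ring
  have hle2 : ∀ y, g y ≤ sE y + ENNReal.ofReal (1 / n) := by
    intro y
    rw [hsE_eq y, hcast, ← ENNReal.ofReal_add (by positivity) (by positivity)]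
    conv_lhs => rw [← ENNReal.ofReal_toReal (hgfin y)]
    apply ENNReal.ofReal_le_ofReal
    have hlt : (n:ℝ) * (g y).toReal < (F y : ℕ) + 1 := Nat.lt_floor_add_one _
    rw [← add_div]
    rw [le_div_iff₀ hnpos]
    nlinarith [hlt]
  have key : ∀ x', |(∫⁻ y, g y ∂κ x').toReal - h x'| ≤ 1 / n := by
    intro x'
    haveI := hκ.1 x'
    have hint_sE : ∫⁻ y, sE y ∂κ x' = ∑ i ∈ Finset.Icc 1 M, (n:ℝ≥0∞)⁻¹ * κ x' (A i) := by
      rw [lintegral_finset_sum _ fun i _ => measurable_const.indicator (hAmeas i)]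
      refine Finset.sum_congr rfl fun i _ => ?_
      rw [lintegral_indicator (hAmeas i), setLIntegral_const]
    have hterm_ne : ∀ i ∈ Finset.Icc 1 M, (n:ℝ≥0∞)⁻¹ * κ x' (A i) ≠ ∞ :=
      fun i _ => ENNReal.mul_ne_top (ENNReal.inv_ne_top.mpr hnne) (measure_ne_top _ _)
    have hh : h x' = (∫⁻ y, sE y ∂κ x').toReal := by
      rw [hint_sE, ENNReal.toReal_sum hterm_ne]
      refine Finset.sum_congr rfl fun i _ => ?_
      simp [ENNReal.toReal_mul, ENNReal.toReal_inv]
    have hT_le : ∫⁻ y, g y ∂κ x' ≤ ENNReal.ofReal C' := by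
      calc ∫⁻ y, g y ∂κ x' ≤ ∫⁻ _, ENNReal.ofReal C' ∂κ x' := lintegral_mono hg'
        _ = ENNReal.ofReal C' := by rw [lintegral_const, measure_univ, mul_one]
    have hfin1 : ∫⁻ y, g y ∂κ x' ≠ ∞ := ne_top_of_le_ne_top ENNReal.ofReal_ne_top hT_le
    have h1 : ∫⁻ y, sE y ∂κ x' ≤ ∫⁻ y, g y ∂κ x' := lintegral_mono hsE_le
    have hfin2 : ∫⁻ y, sE y ∂κ x' ≠ ∞ := ne_top_of_le_ne_top hfin1 h1
    have h2 : ∫⁻ y, g y ∂κ x' ≤ ∫⁻ y, sE y ∂κ x' + ENNReal.ofReal (1 / n) := by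
      calc ∫⁻ y, g y ∂κ x' ≤ ∫⁻ y, sE y + ENNReal.ofReal (1 / n) ∂κ x' :=
            lintegral_mono hle2
        _ = ∫⁻ y, sE y ∂κ x' + ENNReal.ofReal (1 / n) := by
            rw [lintegral_add_right _ measurable_const, lintegral_const, measure_univ,
              mul_one]
    have e1 : (∫⁻ y, sE y ∂κ x').toReal ≤ (∫⁻ y, g y ∂κ x').toReal :=
      ENNReal.toReal_mono hfin1 h1
    have e2 : (∫⁻ y, g y ∂κ x').toReal ≤ (∫⁻ y, sE y ∂κ x').toReal + 1 / n := by
      have := ENNReal.toReal_mono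
        (by exact ENNReal.add_ne_top.mpr ⟨hfin2, ENNReal.ofReal_ne_top⟩) h2
      rwa [ENNReal.toReal_add hfin2 ENNReal.ofReal_ne_top,
        ENNReal.toReal_ofReal (by positivity)] at this
    rw [hh, abs_le]
    constructor <;> [linarith; linarith]
  obtain ⟨δ, hδ, hd⟩ := hdc x (ε / 2) (by positivity)
  refine ⟨δ, hδ, fun y hy => ?_⟩
  have e1 := key x
  have e2 := key y
  have e3 := hd y hy
  have h1n : (1:ℝ) / n + 1 / n = 2 / n := by ring
  have := abs_sub_abs_le_abs_sub ((∫⁻ y', g y' ∂κ y).toReal) ((∫⁻ y', g y' ∂κ x).toReal)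
  calc |(∫⁻ y', g y' ∂κ y).toReal - (∫⁻ y', g y' ∂κ x).toReal|
      ≤ |(∫⁻ y', g y' ∂κ y).toReal - h y| + |h y - h x| + |h x - (∫⁻ y', g y' ∂κ x).toReal| := by
        have := abs_sub_le ((∫⁻ y', g y' ∂κ y).toReal) (h y) ((∫⁻ y', g y' ∂κ x).toReal)
        have := abs_sub_le (h y) (h x) ((∫⁻ y', g y' ∂κ x).toReal)
        calc |(∫⁻ y', g y' ∂κ y).toReal - (∫⁻ y', g y' ∂κ x).toReal|
            ≤ |(∫⁻ y', g y' ∂κ y).toReal - h y| + |h y - (∫⁻ y', g y' ∂κ x).toReal| :=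
              abs_sub_le _ _ _
          _ ≤ |(∫⁻ y', g y' ∂κ y).toReal - h y| +
              (|h y - h x| + |h x - (∫⁻ y', g y' ∂κ x).toReal|) := by
              have := abs_sub_le (h y) (h x) ((∫⁻ y', g y' ∂κ x).toReal)
              linarith
          _ = _ := by ring
    _ < 1 / n + ε / 2 + 1 / n := by
        have ha : |h x - (∫⁻ y', g y' ∂κ x).toReal| ≤ 1 / n := by rw [abs_sub_comm]; exact e1
        have hb : |(∫⁻ y', g y' ∂κ y).toReal - h y| ≤ 1 / n := e2
        have hlt : |h y - h x| < ε / 2 := e3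
        linarith
    _ = 2 / n + ε / 2 := by linarith [h1n]
    _ < ε / 2 + ε / 2 := by linarith [hn2]
    _ = ε := by ring

/-- `dS`-continuity of `x ↦ J_j(x)` (in `toReal` form). -/
lemma Jaux_dcont {κ : S → Measure S} (hκ : IsMarkov κ) (hA : Assumption1 κ) (c' : ℕ → ℝ)
    (xhat : ℕ → S) : ∀ m j, DContinuous fun x => (Jaux κ c' xhat m j x).toReal
  | 0, j => by simpa [Jaux] using dcont_const 0
  | m + 1, j => by
    have hI : DContinuous fun x => (∫⁻ y, Jaux κ c' xhat m (j + 1) y ∂κ x).toReal :=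
      dcont_kernel_lintegral hκ hA (Jaux_measurable hκ c' xhat m (j + 1))
        (max (c' (j + 1)) 0) (Jaux_le κ c' xhat m (j + 1))
    have heq : (fun x => (Jaux κ c' xhat (m + 1) j x).toReal) = fun x =>
        min (dS x (xhat j) ^ 2 + (∫⁻ y, Jaux κ c' xhat m (j + 1) y ∂κ x).toReal)
          (max (c' j) 0) := by
      funext x
      have hIne : ∫⁻ y, Jaux κ c' xhat m (j + 1) y ∂κ x ≠ ∞ :=
        ne_top_of_le_ne_top ENNReal.ofReal_ne_top (lintegral_Jaux_le hκ c' xhat m (j + 1) x)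
      simp only [Jaux]
      rw [ENNReal.toReal_min (ENNReal.add_ne_top.mpr ⟨ENNReal.ofReal_ne_top, hIne⟩)
          ENNReal.ofReal_ne_top,
        ENNReal.toReal_add ENNReal.ofReal_ne_top hIne,
        ENNReal.toReal_ofReal (sq_nonneg _), ENNReal.toReal_ofReal']
    rw [heq]
    exact dcont_min (dcont_add (dcont_dS_sq (xhat j)) hI) (dcont_const _)

lemma JJ_dcont {κ : S → Measure S} (hκ : IsMarkov κ) (hA : Assumption1 κ) (c' : ℕ → ℝ)
    (N : ℕ) (xhat : ℕ → S) (j : ℕ) : DContinuous fun x => (JJ κ c' N xhat j x).toReal :=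
  Jaux_dcont hκ hA c' xhat _ j


/-- A randomized policy: a tuple of Borel measurable functions `f_j : S → [0,1]`. -/
def IsPolicy (k N : ℕ) (f : ℕ → S → ℝ≥0∞) : Prop :=
  ∀ j, k ≤ j → j ≤ N → Measurable (f j) ∧ ∀ x, f j x ≤ 1

/-- Auxiliary cost-to-go recursion for a policy; first argument is `N + 1 - j`. -/
noncomputable def Vaux (κ : S → Measure S) (c' : ℕ → ℝ) (xhat : ℕ → S)
    (f : ℕ → S → ℝ≥0∞) : ℕ → ℕ → S → ℝ≥0∞
  | 0, _, _ => 0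
  | m + 1, j, x =>
      f j x * (ENNReal.ofReal (dS x (xhat j) ^ 2) + ∫⁻ y, Vaux κ c' xhat f m (j + 1) y ∂(κ x))
        + (1 - f j x) * ENNReal.ofReal (c' j)

/-- The cost-to-go `V_j` of a policy `f` with estimates `x̂`. -/
noncomputable def VV (κ : S → Measure S) (c' : ℕ → ℝ) (N : ℕ) (xhat : ℕ → S)
    (f : ℕ → S → ℝ≥0∞) (j : ℕ) (x : S) : ℝ≥0∞ :=
  Vaux κ c' xhat f (N + 1 - j) j x

lemma Vaux_measurable {κ : S → Measure S} (hκ : IsMarkov κ) (c' : ℕ → ℝ) (xhat : ℕ → S)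
    (f : ℕ → S → ℝ≥0∞) :
    ∀ m j, (∀ i, j ≤ i → i < j + m → Measurable (f i)) → Measurable (Vaux κ c' xhat f m j)
  | 0, _, _ => measurable_const
  | m + 1, j, hf => by
    have hfj : Measurable (f j) := hf j le_rfl (by omega)
    have h1 : Measurable fun x => ENNReal.ofReal (dS x (xhat j) ^ 2) :=
      (((continuous_dS_right (xhat j)).pow 2).measurable).ennreal_ofReal
    have h2 : Measurable fun x => ∫⁻ y, Vaux κ c' xhat f m (j + 1) y ∂κ x :=
      measurable_lintegral_kernel hκ
        (Vaux_measurable hκ c' xhat f m (j + 1) fun i hi1 hi2 => hf i (by omega) (by omega))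
    simp only [Vaux]
    exact (hfj.mul (h1.add h2)).add ((measurable_const.sub hfj).mul measurable_const)

lemma Jaux_le_Vaux (κ : S → Measure S) (c' : ℕ → ℝ) (xhat : ℕ → S) (f : ℕ → S → ℝ≥0∞) :
    ∀ m j, (∀ i x, j ≤ i → i < j + m → f i x ≤ 1) →
      ∀ x, Jaux κ c' xhat m j x ≤ Vaux κ c' xhat f m j x
  | 0, _, _, _ => le_rfl
  | m + 1, j, hf, x => by
    simp only [Jaux, Vaux]
    have hf1 : f j x ≤ 1 := hf j x le_rfl (by omega)
    have hIV : ∫⁻ y, Jaux κ c' xhat m (j + 1) y ∂κ x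
        ≤ ∫⁻ y, Vaux κ c' xhat f m (j + 1) y ∂κ x :=
      lintegral_mono fun y =>
        Jaux_le_Vaux κ c' xhat f m (j + 1) (fun i x' h1 h2 => hf i x' (by omega) (by omega)) y
    set mJ := min (ENNReal.ofReal (dS x (xhat j) ^ 2)
      + ∫⁻ y, Jaux κ c' xhat m (j + 1) y ∂κ x) (ENNReal.ofReal (c' j)) with hmJ
    have h1 : mJ ≤ ENNReal.ofReal (dS x (xhat j) ^ 2)
        + ∫⁻ y, Vaux κ c' xhat f m (j + 1) y ∂κ x :=
      le_trans (min_le_left _ _) (add_le_add_right hIV _)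
    have h2 : mJ ≤ ENNReal.ofReal (c' j) := min_le_right _ _
    calc mJ = (f j x + (1 - f j x)) * mJ := by
          rw [add_tsub_cancel_of_le hf1, one_mul]
      _ = f j x * mJ + (1 - f j x) * mJ := by rw [add_mul]
      _ ≤ f j x * (ENNReal.ofReal (dS x (xhat j) ^ 2)
            + ∫⁻ y, Vaux κ c' xhat f m (j + 1) y ∂κ x)
          + (1 - f j x) * ENNReal.ofReal (c' j) :=
          add_le_add (mul_le_mul_right h1 _) (mul_le_mul_right h2 _)

/-- The key pointwise "forcing" dichotomy at an optimal point. -/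
lemma forcing {f D IV IJ c : ℝ≥0∞} (hf1 : f ≤ 1) (hIJle : IJ ≤ IV) (hIJ : IJ ≠ ∞)
    (hD : D ≠ ∞) (hc : c ≠ ∞)
    (heq : f * (D + IV) + (1 - f) * c = min (D + IJ) c) :
    (D + IJ < c → f = 1) ∧ (0 < f → IV = IJ) := by
  have hA : D + IJ ≠ ∞ := ENNReal.add_ne_top.mpr ⟨hD, hIJ⟩
  have hAV : D + IJ ≤ D + IV := add_le_add_right hIJle D
  have hfne : f ≠ ∞ := ne_top_of_le_ne_top ENNReal.one_ne_top hf1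
  have main1 : D + IJ < c → f = 1 ∧ IV = IJ := by
    intro hlt
    rw [min_eq_left hlt.le] at heq
    have hf1' : f = 1 := by
      by_contra hne
      have hflt : f < 1 := lt_of_le_of_ne hf1 hne
      have h1f : (1 - f) ≠ 0 := by
        simpa [tsub_eq_zero_iff_le] using not_le.mpr hflt
      have h1fne : (1 - f) ≠ ∞ := ne_top_of_le_ne_top ENNReal.one_ne_top tsub_le_self
      have hstrict : (1 - f) * (D + IJ) < (1 - f) * c :=
        (ENNReal.mul_lt_mul_iff_right h1f h1fne).mpr hlt
      have hge : f * (D + IJ) + (1 - f) * (D + IJ) = D + IJ := by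
        rw [← add_mul, add_tsub_cancel_of_le hf1, one_mul]
      have hgt : D + IJ < f * (D + IV) + (1 - f) * c := by
        calc D + IJ = f * (D + IJ) + (1 - f) * (D + IJ) := hge.symm
          _ < f * (D + IJ) + (1 - f) * c :=
              ENNReal.add_lt_add_left (ENNReal.mul_ne_top hfne hA) hstrict
          _ ≤ f * (D + IV) + (1 - f) * c :=
              add_le_add_left (mul_le_mul_right hAV f) _
      exact absurd heq (ne_of_gt hgt)
    subst hf1'
    rw [tsub_self, zero_mul, add_zero, one_mul] at heq
    exact ⟨rfl, (ENNReal.add_right_inj hD).mp heq⟩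
  refine ⟨fun h => (main1 h).1, fun hfpos => ?_⟩
  by_cases hlt : D + IJ < c
  · exact (main1 hlt).2
  · push_neg at hlt
    rw [min_eq_right hlt] at heq
    have h1fc : (1 - f) * c ≠ ∞ :=
      ENNReal.mul_ne_top (ne_top_of_le_ne_top ENNReal.one_ne_top tsub_le_self) hc
    have hsplit : f * c + (1 - f) * c = c := by
      rw [← add_mul, add_tsub_cancel_of_le hf1, one_mul]
    have h2' : (1 - f) * c + f * (D + IV) = (1 - f) * c + f * c := by
      calc (1 - f) * c + f * (D + IV) = f * (D + IV) + (1 - f) * c := add_comm _ _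
        _ = c := heq
        _ = f * c + (1 - f) * c := hsplit.symm
        _ = (1 - f) * c + f * c := add_comm _ _
    have h3 : f * (D + IV) = f * c := (ENNReal.add_right_inj h1fc).mp h2'
    have hAVc : D + IV = c := (ENNReal.mul_right_inj (ne_of_gt hfpos) hfne).mp h3
    have hDD : D + IJ = D + IV := le_antisymm hAV (by rw [hAVc]; exact hlt)
    exact ((ENNReal.add_right_inj hD).mp hDD).symm

lemma ae_eq_of_le_of_lintegral_eq {μ : Measure S} {g h : S → ℝ≥0∞} (hgm : Measurable g)
    (hhm : Measurable h) (hle : ∀ x, g x ≤ h x) (heq : ∫⁻ x, h x ∂μ = ∫⁻ x, g x ∂μ)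
    (hfin : ∫⁻ x, g x ∂μ ≠ ∞) : h =ᵐ[μ] g := by
  have hsub : ∫⁻ x, h x - g x ∂μ = 0 := by
    rw [lintegral_sub hgm hfin (Filter.Eventually.of_forall hle), heq, tsub_self]
  have h0 : (fun x => h x - g x) =ᵐ[μ] 0 := (lintegral_eq_zero_iff (hhm.sub hgm)).mp hsub
  filter_upwards [h0] with x hx
  exact le_antisymm (tsub_eq_zero_iff_le.mp hx) (hle x)

lemma lintegral_lt_of_lt_on_pos {μ : Measure S} {g h : S → ℝ≥0∞} (hgm : Measurable g)
    (hhm : Measurable h) (hle : ∀ x, g x ≤ h x) (hfin : ∫⁻ x, h x ∂μ ≠ ∞)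
    (hpos : 0 < μ {x | g x < h x}) : ∫⁻ x, g x ∂μ < ∫⁻ x, h x ∂μ := by
  rcases lt_or_eq_of_le (lintegral_mono hle : ∫⁻ x, g x ∂μ ≤ ∫⁻ x, h x ∂μ) with hlt | heq
  · exact hlt
  · exfalso
    have hfin' : ∫⁻ x, g x ∂μ ≠ ∞ := by rw [heq]; exact hfin
    have hae := ae_eq_of_le_of_lintegral_eq hgm hhm hle heq.symm hfin'
    have hnull : μ {x | g x < h x} = 0 :=
      measure_mono_null (fun x hx => ne_of_gt hx) (ae_iff.mp hae)
    exact absurd hnull (ne_of_gt hpos)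


/-- The total expected cost `C(f_{k:N}, x̂_{k:N})`. -/
noncomputable def Cost (κ : S → Measure S) (c' : ℕ → ℝ) (k N : ℕ) (xhat : ℕ → S)
    (f : ℕ → S → ℝ≥0∞) : ℝ≥0∞ :=
  ∫⁻ y, VV κ c' N xhat f k y ∂(κ origin)

/-- `f ∈ 𝔓(x̂_{k:N})`: `f` minimizes the cost over all randomized policies. -/
def inP (κ : S → Measure S) (c' : ℕ → ℝ) (k N : ℕ) (xhat : ℕ → S)
    (f : ℕ → S → ℝ≥0∞) : Prop :=
  IsPolicy k N f ∧
    ∀ g : ℕ → S → ℝ≥0∞, IsPolicy k N g → Cost κ c' k N xhat f ≤ Cost κ c' k N xhat g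

/-- `x̂ ∈ 𝔛(f_{k:N})`: the estimates minimize the cost for the policy `f`. -/
def inX (κ : S → Measure S) (c' : ℕ → ℝ) (k N : ℕ) (f : ℕ → S → ℝ≥0∞)
    (xhat : ℕ → S) : Prop :=
  ∀ yhat : ℕ → S, Cost κ c' k N xhat f ≤ Cost κ c' k N yhat f

/-- Conditioning a measure on "no transmission" at stage `j`. -/
noncomputable def condMeas (f : ℕ → S → ℝ≥0∞) (j : ℕ) (μ : Measure S) : Measure S :=
  (∫⁻ x, f j x ∂μ)⁻¹ • μ.withDensity (f j)

/-- The predicted measures `μ_{j|j−1}`, by recursion on `j - k`. -/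
noncomputable def mupredAux (κ : S → Measure S) (f : ℕ → S → ℝ≥0∞) (k : ℕ) :
    ℕ → Measure S
  | 0 => κ origin
  | n + 1 => (condMeas f (k + n) (mupredAux κ f k n)).bind κ

/-- `μ_{j|j−1}`. -/
noncomputable def mupred (κ : S → Measure S) (f : ℕ → S → ℝ≥0∞) (k j : ℕ) : Measure S :=
  mupredAux κ f k (j - k)

/-- `q_j = ∫ f_j dμ_{j|j−1}`. -/
noncomputable def qq (κ : S → Measure S) (f : ℕ → S → ℝ≥0∞) (k j : ℕ) : ℝ≥0∞ :=
  ∫⁻ x, f j x ∂(mupred κ f k j)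

/-- `μ_{j|j}`. -/
noncomputable def mucond (κ : S → Measure S) (f : ℕ → S → ℝ≥0∞) (k j : ℕ) : Measure S :=
  condMeas f j (mupred κ f k j)

/-- Non-degeneracy of a policy. -/
def NonDeg (κ : S → Measure S) (f : ℕ → S → ℝ≥0∞) (k N : ℕ) : Prop :=
  ∀ j, k ≤ j → j ≤ N → 0 < qq κ f k j

/-- The closed "no transmission" region `D̄_j`. -/
noncomputable def Dbar (κ : S → Measure S) (c' : ℕ → ℝ) (N : ℕ) (xhat : ℕ → S)
    (j : ℕ) : Set S :=
  {x : S | ENNReal.ofReal (dS x (xhat j) ^ 2) + ∫⁻ y, JJ κ c' N xhat (j + 1) y ∂(κ x)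
      ≤ ENNReal.ofReal (c' j)}

/-- The open "no transmission" region `Ḏ_j`. -/
noncomputable def Dund (κ : S → Measure S) (c' : ℕ → ℝ) (N : ℕ) (xhat : ℕ → S)
    (j : ℕ) : Set S :=
  {x : S | ENNReal.ofReal (dS x (xhat j) ^ 2) + ∫⁻ y, JJ κ c' N xhat (j + 1) y ∂(κ x)
      < ENNReal.ofReal (c' j)}

/-- Hypothesis (H). -/
def HypH (κ : S → Measure S) (c' : ℕ → ℝ) (k N : ℕ) : Prop :=
  ∀ j, k ≤ j → j ≤ N → ∃ xhat : ℕ → S, (Dund κ c' N xhat j).Nonempty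

lemma VV_succ (κ : S → Measure S) (c' : ℕ → ℝ) {N : ℕ} (xhat : ℕ → S) (f : ℕ → S → ℝ≥0∞)
    {j : ℕ} (hjN : j ≤ N) (x : S) :
    VV κ c' N xhat f j x = f j x * (ENNReal.ofReal (dS x (xhat j) ^ 2)
      + ∫⁻ y, VV κ c' N xhat f (j + 1) y ∂κ x) + (1 - f j x) * ENNReal.ofReal (c' j) := by
  have h1 : N + 1 - j = (N - j) + 1 := by omega
  have h2 : N + 1 - (j + 1) = N - j := by omega
  unfold VV
  rw [h1, h2]
  rfl

lemma JJ_le_VV (κ : S → Measure S) (c' : ℕ → ℝ) (N : ℕ) (xhat : ℕ → S) (f : ℕ → S → ℝ≥0∞)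
    (j : ℕ) (hf : ∀ i x, j ≤ i → i ≤ N → f i x ≤ 1) (x : S) :
    JJ κ c' N xhat j x ≤ VV κ c' N xhat f j x := by
  apply Jaux_le_Vaux
  intro i x' h1 h2
  exact hf i x' h1 (by omega)

lemma VV_measurable {κ : S → Measure S} (hκ : IsMarkov κ) (c' : ℕ → ℝ) (N : ℕ)
    (xhat : ℕ → S) (f : ℕ → S → ℝ≥0∞) (j : ℕ)
    (hf : ∀ i, j ≤ i → i ≤ N → Measurable (f i)) : Measurable (VV κ c' N xhat f j) := by
  apply Vaux_measurable hκ
  intro i h1 h2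
  exact hf i h1 (by omega)

lemma Dbar_measurableSet {κ : S → Measure S} (hκ : IsMarkov κ) (c' : ℕ → ℝ) (N : ℕ)
    (xhat : ℕ → S) (j : ℕ) : MeasurableSet (Dbar κ c' N xhat j) := by
  have h1 : Measurable fun x => ENNReal.ofReal (dS x (xhat j) ^ 2) :=
    (((continuous_dS_right (xhat j)).pow 2).measurable).ennreal_ofReal
  have h2 : Measurable fun x => ∫⁻ y, JJ κ c' N xhat (j + 1) y ∂κ x :=
    measurable_lintegral_kernel hκ (JJ_measurable hκ c' N xhat (j + 1))
  exact measurableSet_le (h1.add h2) measurable_const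

lemma Dund_measurableSet {κ : S → Measure S} (hκ : IsMarkov κ) (c' : ℕ → ℝ) (N : ℕ)
    (xhat : ℕ → S) (j : ℕ) : MeasurableSet (Dund κ c' N xhat j) := by
  have h1 : Measurable fun x => ENNReal.ofReal (dS x (xhat j) ^ 2) :=
    (((continuous_dS_right (xhat j)).pow 2).measurable).ennreal_ofReal
  have h2 : Measurable fun x => ∫⁻ y, JJ κ c' N xhat (j + 1) y ∂κ x :=
    measurable_lintegral_kernel hκ (JJ_measurable hκ c' N xhat (j + 1))
  exact measurableSet_lt (h1.add h2) measurable_const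

lemma Dund_dopen {κ : S → Measure S} (hκ : IsMarkov κ) (hA : Assumption1 κ) (c' : ℕ → ℝ)
    (N : ℕ) (xhat : ℕ → S) (j : ℕ) : DOpen (Dund κ c' N xhat j) := by
  have heq : Dund κ c' N xhat j = {x | dS x (xhat j) ^ 2
      + (∫⁻ y, JJ κ c' N xhat (j + 1) y ∂κ x).toReal < c' j} := by
    ext x
    simp only [Dund, Set.mem_setOf_eq]
    rw [← ENNReal.ofReal_toReal (lintegral_JJ_ne_top hκ c' N xhat (j + 1) x),
      ← ENNReal.ofReal_add (sq_nonneg _) ENNReal.toReal_nonneg,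
      ENNReal.ofReal_lt_ofReal_iff_of_nonneg
        (add_nonneg (sq_nonneg _) ENNReal.toReal_nonneg),
      ENNReal.toReal_ofReal ENNReal.toReal_nonneg]
  rw [heq]
  exact dopen_lt
    (dcont_add (dcont_dS_sq _)
      (dcont_kernel_lintegral hκ hA (JJ_measurable hκ c' N xhat (j + 1))
        (max (c' (j + 1)) 0) (JJ_le κ c' N xhat (j + 1))))
    (dcont_const _)

/-- The deterministic threshold policy attaining `J*`. -/
noncomputable def fth (κ : S → Measure S) (c' : ℕ → ℝ) (N : ℕ) (xhat : ℕ → S) :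
    ℕ → S → ℝ≥0∞ :=
  fun j => (Dbar κ c' N xhat j).indicator fun _ => 1

lemma fth_policy {κ : S → Measure S} (hκ : IsMarkov κ) (c' : ℕ → ℝ) (k N : ℕ)
    (xhat : ℕ → S) : IsPolicy k N (fth κ c' N xhat) := by
  intro j _ _
  refine ⟨measurable_const.indicator (Dbar_measurableSet hκ c' N xhat j), fun x => ?_⟩
  unfold fth
  by_cases hx : x ∈ Dbar κ c' N xhat j
  · rw [Set.indicator_of_mem hx]
  · rw [Set.indicator_of_notMem hx]; exact zero_le

lemma Vaux_fth (κ : S → Measure S) (c' : ℕ → ℝ) (N : ℕ) (xhat : ℕ → S) :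
    ∀ m j, j + m = N + 1 →
      ∀ x, Vaux κ c' xhat (fth κ c' N xhat) m j x = Jaux κ c' xhat m j x
  | 0, _, _, _ => rfl
  | m + 1, j, hj, x => by
    have hm : N + 1 - (j + 1) = m := by omega
    have hInt : ∫⁻ y, Vaux κ c' xhat (fth κ c' N xhat) m (j + 1) y ∂κ x
        = ∫⁻ y, Jaux κ c' xhat m (j + 1) y ∂κ x :=
      lintegral_congr fun y => Vaux_fth κ c' N xhat m (j + 1) (by omega) y
    have hJJ : ∫⁻ y, JJ κ c' N xhat (j + 1) y ∂κ x
        = ∫⁻ y, Jaux κ c' xhat m (j + 1) y ∂κ x := by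
      apply lintegral_congr
      intro y
      unfold JJ
      rw [hm]
    by_cases hx : x ∈ Dbar κ c' N xhat j
    · have hfx : fth κ c' N xhat j x = 1 := Set.indicator_of_mem hx _
      have hDb : ENNReal.ofReal (dS x (xhat j) ^ 2)
          + ∫⁻ y, Jaux κ c' xhat m (j + 1) y ∂κ x ≤ ENNReal.ofReal (c' j) := by
        rw [← hJJ]; exact hx
      simp only [Vaux, Jaux, hfx, one_mul, tsub_self, zero_mul, add_zero, hInt]
      exact (min_eq_left hDb).symm
    · have hfx : fth κ c' N xhat j x = 0 := Set.indicator_of_notMem hx _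
      have hDb : ENNReal.ofReal (c' j) ≤ ENNReal.ofReal (dS x (xhat j) ^ 2)
          + ∫⁻ y, Jaux κ c' xhat m (j + 1) y ∂κ x := by
        rw [← hJJ]
        exact le_of_not_ge hx
      simp only [Vaux, Jaux, hfx, zero_mul, zero_add, tsub_zero, one_mul]
      exact (min_eq_right hDb).symm

lemma Cost_fth (κ : S → Measure S) (c' : ℕ → ℝ) {k N : ℕ} (hkN : k ≤ N) (xhat : ℕ → S) :
    Cost κ c' k N xhat (fth κ c' N xhat) = Gtot κ c' k N xhat := by
  unfold Cost Gtot Gj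
  exact lintegral_congr fun y => Vaux_fth κ c' N xhat (N + 1 - k) k (by omega) y

lemma Gtot_le_Cost (κ : S → Measure S) (c' : ℕ → ℝ) (k N : ℕ) (xhat : ℕ → S)
    (f : ℕ → S → ℝ≥0∞) (hf : IsPolicy k N f) :
    Gtot κ c' k N xhat ≤ Cost κ c' k N xhat f := by
  unfold Cost Gtot Gj
  apply lintegral_mono
  intro y
  exact JJ_le_VV κ c' N xhat f k (fun i x h1 h2 => (hf i h1 h2).2 x) y

lemma lintegral_JJ_strict {κ : S → Measure S} (hκ : IsMarkov κ) (hA : Assumption1 κ)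
    (c' : ℕ → ℝ) (N : ℕ) (z w : ℕ → S) (i : ℕ)
    (hle : ∀ x, JJ κ c' N z i x ≤ JJ κ c' N w i x)
    {x0 : S} (hlt : JJ κ c' N z i x0 < JJ κ c' N w i x0) (x : S) :
    ∫⁻ y, JJ κ c' N z i y ∂κ x < ∫⁻ y, JJ κ c' N w i y ∂κ x := by
  apply lintegral_lt_of_lt_on_pos (JJ_measurable hκ c' N z i) (JJ_measurable hκ c' N w i)
    hle (lintegral_JJ_ne_top hκ c' N w i x)
  have hz' : (JJ κ c' N z i x0).toReal < (JJ κ c' N w i x0).toReal :=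
    (ENNReal.toReal_lt_toReal (JJ_ne_top κ c' N z i x0) (JJ_ne_top κ c' N w i x0)).mpr hlt
  obtain ⟨δ, hδ, hball⟩ :=
    dcont_lt_ball (JJ_dcont hκ hA c' N z i) (JJ_dcont hκ hA c' N w i) hz'
  have hsub : {y | dS x0 y < δ} ⊆ {y | JJ κ c' N z i y < JJ κ c' N w i y} := by
    intro y hy
    exact (ENNReal.toReal_lt_toReal (JJ_ne_top κ c' N z i y) (JJ_ne_top κ c' N w i y)).mp
      (hball y hy)
  calc (0:ℝ≥0∞) < κ x {y | dS x0 y < δ} :=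
        hA.2 _ (dopen_ball x0 δ) ⟨x0, by simpa [dS_self] using hδ⟩ x
    _ ≤ κ x {y | JJ κ c' N z i y < JJ κ c' N w i y} := measure_mono hsub

lemma mupred_self (κ : S → Measure S) (f : ℕ → S → ℝ≥0∞) (k : ℕ) :
    mupred κ f k k = κ origin := by
  unfold mupred
  rw [Nat.sub_self]
  rfl

lemma mupred_succ (κ : S → Measure S) (f : ℕ → S → ℝ≥0∞) {k j : ℕ} (hkj : k ≤ j) :
    mupred κ f k (j + 1) = (mucond κ f k j).bind κ := by
  unfold mupred mucond condMeas
  rw [show j + 1 - k = (j - k) + 1 from by omega]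
  simp only [mupredAux]
  rw [show k + (j - k) = j from by omega]
  rfl


/-- Weak convergence of measures on `(S, dS)`: tested against `dS`-continuous
bounded functions. -/
def WeakConvS (μl : ℕ → Measure S) (μ : Measure S) : Prop :=
  ∀ h : S → ℝ, DContinuous h → (∃ C : ℝ, ∀ x, |h x| ≤ C) →
    Tendsto (fun l => ∫ x, h x ∂(μl l)) atTop (𝓝 (∫ x, h x ∂μ))

/-- Convergence of a sequence of (non-degenerate) policies to a policy. -/
def PolConv (κ : S → Measure S) (k N : ℕ) (g : ℕ → ℕ → S → ℝ≥0∞)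
    (f : ℕ → S → ℝ≥0∞) : Prop :=
  ∀ j, k ≤ j → j ≤ N →
    WeakConvS (fun l => mucond κ (g l) k j) (mucond κ f k j) ∧
      Tendsto (fun l => qq κ (g l) k j) atTop (𝓝 (qq κ f k j))

lemma Dund_xstar_nonempty {κ : S → Measure S} (hκ : IsMarkov κ) (hA : Assumption1 κ)
    {k N : ℕ} (hkN : k ≤ N) (c' : ℕ → ℝ) (hH : HypH κ c' k N)
    (fstar : ℕ → S → ℝ≥0∞) (xstar : ℕ → S) (hfstar : IsPolicy k N fstar)
    (hopt : ∀ (f : ℕ → S → ℝ≥0∞) (xhat : ℕ → S), IsPolicy k N f →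
      Cost κ c' k N xstar fstar ≤ Cost κ c' k N xhat f)
    {j : ℕ} (hkj : k ≤ j) (hjN : j ≤ N) : (Dund κ c' N xstar j).Nonempty := by
  by_contra hne
  rw [Set.not_nonempty_iff_eq_empty] at hne
  have hJconst : ∀ x, JJ κ c' N xstar j x = ENNReal.ofReal (c' j) := by
    intro x
    rw [JJ_succ κ c' xstar hjN x, min_eq_right]
    by_contra hlt
    have hx : x ∈ Dund κ c' N xstar j := not_le.mp hlt
    rw [hne] at hx
    exact Set.notMem_empty x hx
  have R : ∀ t i, i + t = j → k ≤ i → ∃ z : ℕ → S,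
      (∀ x, JJ κ c' N z i x ≤ JJ κ c' N xstar i x) ∧
      ∃ x, JJ κ c' N z i x < JJ κ c' N xstar i x := by
    intro t
    induction t with
    | zero =>
      intro i hij hki
      rw [show i = j from by omega]
      obtain ⟨w, x1, hx1⟩ := hH j hkj hjN
      refine ⟨w, fun x => ?_, ⟨x1, ?_⟩⟩
      · rw [hJconst x, JJ_succ κ c' w hjN x]
        exact min_le_right _ _
      · rw [hJconst x1, JJ_succ κ c' w hjN x1, min_eq_left hx1.le]
        exact hx1
    | succ t ih =>
      intro i hij hki
      obtain ⟨z, hzle, x0, hzlt⟩ := ih (i + 1) (by omega) (by omega)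
      have hiN : i ≤ N := by omega
      have hstrict : ∀ x, ∫⁻ y, JJ κ c' N z (i + 1) y ∂κ x
          < ∫⁻ y, JJ κ c' N xstar (i + 1) y ∂κ x :=
        fun x => lintegral_JJ_strict hκ hA c' N z xstar (i + 1) hzle hzlt x
      set z' := Function.update z i (xstar i) with hz'def
      have hJz' : ∀ y, JJ κ c' N z' (i + 1) y = JJ κ c' N z (i + 1) y := fun y =>
        JJ_congr κ c' N z' z (i + 1) (fun i' hi' => Function.update_of_ne (by omega) _ _) y
      by_cases hex : ∃ x, ENNReal.ofReal (dS x (xstar i) ^ 2)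
          + ∫⁻ y, JJ κ c' N z (i + 1) y ∂κ x < ENNReal.ofReal (c' i)
      · obtain ⟨x2, hx2⟩ := hex
        have hupd : z' i = xstar i := Function.update_self i (xstar i) z
        have hIeq : ∀ x, ∫⁻ y, JJ κ c' N z' (i + 1) y ∂κ x
            = ∫⁻ y, JJ κ c' N z (i + 1) y ∂κ x :=
          fun x => lintegral_congr fun y => hJz' y
        refine ⟨z', fun x => ?_, ⟨x2, ?_⟩⟩
        · rw [JJ_succ κ c' z' hiN x, JJ_succ κ c' xstar hiN x, hupd, hIeq x]
          exact min_le_min (add_le_add_right (lintegral_mono fun y => hzle y) _) le_rfl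
        · rw [JJ_succ κ c' z' hiN x2, JJ_succ κ c' xstar hiN x2, hupd, hIeq x2]
          have hlt1 : ENNReal.ofReal (dS x2 (xstar i) ^ 2)
                + ∫⁻ y, JJ κ c' N z (i + 1) y ∂κ x2
              < ENNReal.ofReal (dS x2 (xstar i) ^ 2)
                + ∫⁻ y, JJ κ c' N xstar (i + 1) y ∂κ x2 :=
            ENNReal.add_lt_add_left ENNReal.ofReal_ne_top (hstrict x2)
          rw [min_eq_left hx2.le]
          exact lt_min hlt1 hx2
      · push_neg at hex
        obtain ⟨w, x1, hx1⟩ := hH i hki hiN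
        have hJconsti : ∀ x, JJ κ c' N xstar i x = ENNReal.ofReal (c' i) := by
          intro x
          rw [JJ_succ κ c' xstar hiN x, min_eq_right]
          calc ENNReal.ofReal (c' i)
              ≤ ENNReal.ofReal (dS x (xstar i) ^ 2)
                + ∫⁻ y, JJ κ c' N z (i + 1) y ∂κ x := hex x
            _ ≤ ENNReal.ofReal (dS x (xstar i) ^ 2)
                + ∫⁻ y, JJ κ c' N xstar (i + 1) y ∂κ x :=
                add_le_add_right (lintegral_mono fun y => hzle y) _
        refine ⟨w, fun x => ?_, ⟨x1, ?_⟩⟩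
        · rw [hJconsti x, JJ_succ κ c' w hiN x]
          exact min_le_right _ _
        · rw [hJconsti x1, JJ_succ κ c' w hiN x1, min_eq_left hx1.le]
          exact hx1
  obtain ⟨z, hzle, x0, hzlt⟩ := R (j - k) k (by omega) le_rfl
  have hGlt : Gtot κ c' k N z < Gtot κ c' k N xstar :=
    lintegral_JJ_strict hκ hA c' N z xstar k hzle hzlt origin
  have h1 : Gtot κ c' k N xstar ≤ Cost κ c' k N xstar fstar :=
    Gtot_le_Cost κ c' k N xstar fstar hfstar
  have h2 : Cost κ c' k N xstar fstar ≤ Cost κ c' k N z (fth κ c' N z) :=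
    hopt _ z (fth_policy hκ c' k N z)
  rw [Cost_fth κ c' hkN z] at h2
  exact absurd (le_trans h1 h2) (not_le.mpr hGlt)

lemma step_qpos {κ : S → Measure S} (hκ : IsMarkov κ) (hA : Assumption1 κ)
    {k N : ℕ} (hkN : k ≤ N) (c' : ℕ → ℝ) (hH : HypH κ c' k N)
    (fstar : ℕ → S → ℝ≥0∞) (xstar : ℕ → S) (hfstar : IsPolicy k N fstar)
    (hopt : ∀ (f : ℕ → S → ℝ≥0∞) (xhat : ℕ → S), IsPolicy k N f →
      Cost κ c' k N xstar fstar ≤ Cost κ c' k N xhat f)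
    {j : ℕ} (hkj : k ≤ j) (hjN : j ≤ N)
    (hpos : ∀ (c : S) (δ : ℝ), 0 < δ → 0 < mupred κ fstar k j {y | dS c y < δ})
    (hae : VV κ c' N xstar fstar j =ᵐ[mupred κ fstar k j] JJ κ c' N xstar j) :
    0 < qq κ fstar k j := by
  obtain ⟨x0, hx0⟩ := Dund_xstar_nonempty hκ hA hkN c' hH fstar xstar hfstar hopt hkj hjN
  obtain ⟨δ, hδ, hball⟩ := Dund_dopen hκ hA c' N xstar j x0 hx0
  have h1 : ∀ᵐ x ∂(mupred κ fstar k j),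
      {y | dS x0 y < δ}.indicator (fun _ => (1 : ℝ≥0∞)) x ≤ fstar j x := by
    filter_upwards [hae] with x hx
    by_cases hmem : x ∈ {y | dS x0 y < δ}
    · rw [Set.indicator_of_mem hmem]
      have hxD : x ∈ Dund κ c' N xstar j := hball x hmem
      rw [VV_succ κ c' xstar fstar hjN x, JJ_succ κ c' xstar hjN x] at hx
      have hIJle : ∫⁻ y, JJ κ c' N xstar (j + 1) y ∂κ x
          ≤ ∫⁻ y, VV κ c' N xstar fstar (j + 1) y ∂κ x :=
        lintegral_mono fun y => JJ_le_VV κ c' N xstar fstar (j + 1)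
          (fun i x' hi1 hi2 => (hfstar i (by omega) hi2).2 x') y
      have hforce := (forcing ((hfstar j hkj hjN).2 x) hIJle
        (lintegral_JJ_ne_top hκ c' N xstar (j + 1) x) ENNReal.ofReal_ne_top
        ENNReal.ofReal_ne_top hx).1 hxD
      rw [hforce]
    · rw [Set.indicator_of_notMem hmem]
      exact zero_le
  calc (0 : ℝ≥0∞) < mupred κ fstar k j {y | dS x0 y < δ} := hpos x0 δ hδ
    _ = ∫⁻ x, {y | dS x0 y < δ}.indicator (fun _ => (1 : ℝ≥0∞)) x
          ∂(mupred κ fstar k j) := by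
        rw [lintegral_indicator (dS_measurableSet_ball x0 δ), setLIntegral_one]
    _ ≤ ∫⁻ x, fstar j x ∂(mupred κ fstar k j) := lintegral_mono_ae h1
    _ = qq κ fstar k j := rfl

lemma base_ae {κ : S → Measure S} (hκ : IsMarkov κ)
    {k N : ℕ} (hkN : k ≤ N) (c' : ℕ → ℝ)
    (fstar : ℕ → S → ℝ≥0∞) (xstar : ℕ → S) (hfstar : IsPolicy k N fstar)
    (hopt : ∀ (f : ℕ → S → ℝ≥0∞) (xhat : ℕ → S), IsPolicy k N f →
      Cost κ c' k N xstar fstar ≤ Cost κ c' k N xhat f) :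
    VV κ c' N xstar fstar k =ᵐ[mupred κ fstar k k] JJ κ c' N xstar k := by
  rw [mupred_self]
  have hle : ∀ y, JJ κ c' N xstar k y ≤ VV κ c' N xstar fstar k y :=
    JJ_le_VV κ c' N xstar fstar k fun i x hi1 hi2 => (hfstar i hi1 hi2).2 x
  have hcost : ∫⁻ y, VV κ c' N xstar fstar k y ∂κ origin
      = ∫⁻ y, JJ κ c' N xstar k y ∂κ origin := by
    apply le_antisymm
    · have h2 := hopt (fth κ c' N xstar) xstar (fth_policy hκ c' k N xstar)
      rw [Cost_fth κ c' hkN xstar] at h2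
      exact h2
    · exact lintegral_mono hle
  exact ae_eq_of_le_of_lintegral_eq (JJ_measurable hκ c' N xstar k)
    (VV_measurable hκ c' N xstar fstar k fun i h1 h2 => (hfstar i h1 h2).1) hle hcost
    (lintegral_JJ_ne_top hκ c' N xstar k origin)

lemma step_next {κ : S → Measure S} (hκ : IsMarkov κ) (hA : Assumption1 κ)
    {k N : ℕ} (c' : ℕ → ℝ)
    (fstar : ℕ → S → ℝ≥0∞) (xstar : ℕ → S) (hfstar : IsPolicy k N fstar)
    {j : ℕ} (hkj : k ≤ j) (hjN : j ≤ N)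
    (hprob : IsProbabilityMeasure (mupred κ fstar k j))
    (hae : VV κ c' N xstar fstar j =ᵐ[mupred κ fstar k j] JJ κ c' N xstar j)
    (hq : 0 < qq κ fstar k j) :
    IsProbabilityMeasure (mupred κ fstar k (j + 1)) ∧
    (∀ (c : S) (δ : ℝ), 0 < δ → 0 < mupred κ fstar k (j + 1) {y | dS c y < δ}) ∧
    (VV κ c' N xstar fstar (j + 1) =ᵐ[mupred κ fstar k (j + 1)] JJ κ c' N xstar (j + 1)) := by
  have hfjm : Measurable (fstar j) := (hfstar j hkj hjN).1
  have hqle : qq κ fstar k j ≤ 1 := by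
    calc qq κ fstar k j ≤ ∫⁻ _, 1 ∂(mupred κ fstar k j) :=
          lintegral_mono fun x => (hfstar j hkj hjN).2 x
      _ = 1 := by rw [lintegral_one, measure_univ]
  have hqne : qq κ fstar k j ≠ ∞ := ne_top_of_le_ne_top ENNReal.one_ne_top hqle
  have hwd : (mupred κ fstar k j).withDensity (fstar j) Set.univ = qq κ fstar k j := by
    rw [withDensity_apply _ MeasurableSet.univ, setLIntegral_univ]
    rfl
  have hcond_prob : IsProbabilityMeasure (mucond κ fstar k j) := by
    constructor
    show condMeas fstar j (mupred κ fstar k j) Set.univ = 1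
    unfold condMeas
    rw [Measure.smul_apply, hwd, smul_eq_mul]
    exact ENNReal.inv_mul_cancel (ne_of_gt hq) hqne
  have hbind : mupred κ fstar k (j + 1) = (mucond κ fstar k j).bind κ :=
    mupred_succ κ fstar hkj
  refine ⟨?_, ?_, ?_⟩
  · constructor
    rw [hbind, Measure.bind_apply MeasurableSet.univ (measurable_kernel hκ).aemeasurable,
      lintegral_congr (fun x => by
        haveI := hκ.1 x
        exact (measure_univ : κ x Set.univ = 1)),
      lintegral_one, measure_univ]
  · intro c δ hδ
    rw [hbind, Measure.bind_apply (dS_measurableSet_ball c δ) (measurable_kernel hκ).aemeasurable,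
      lintegral_pos_iff_support (hκ.2 _ (dS_measurableSet_ball c δ))]
    have hsupp : Function.support (fun x => κ x {y | dS c y < δ}) = Set.univ :=
      Set.eq_univ_of_forall fun x =>
        ne_of_gt (hA.2 _ (dopen_ball c δ) ⟨c, by simpa [dS_self] using hδ⟩ x)
    rw [hsupp]
    rw [hcond_prob.measure_univ]
    exact one_pos
  · have hVm : Measurable (VV κ c' N xstar fstar (j + 1)) :=
      VV_measurable hκ c' N xstar fstar (j + 1) fun i h1 h2 => (hfstar i (by omega) h2).1
    have hJm : Measurable (JJ κ c' N xstar (j + 1)) := JJ_measurable hκ c' N xstar (j + 1)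
    have hVJle : ∀ y, JJ κ c' N xstar (j + 1) y ≤ VV κ c' N xstar fstar (j + 1) y :=
      fun y => JJ_le_VV κ c' N xstar fstar (j + 1)
        (fun i x' hi1 hi2 => (hfstar i (by omega) hi2).2 x') y
    have hBadm : MeasurableSet
        {y | VV κ c' N xstar fstar (j + 1) y ≠ JJ κ c' N xstar (j + 1) y} := by
      have heq : {y | VV κ c' N xstar fstar (j + 1) y ≠ JJ κ c' N xstar (j + 1) y}
          = {y | VV κ c' N xstar fstar (j + 1) y < JJ κ c' N xstar (j + 1) y}
            ∪ {y | JJ κ c' N xstar (j + 1) y < VV κ c' N xstar fstar (j + 1) y} := by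
        ext y
        simp only [Set.mem_setOf_eq, Set.mem_union]
        exact ne_iff_lt_or_gt
      rw [heq]
      exact (measurableSet_lt hVm hJm).union (measurableSet_lt hJm hVm)
    suffices hnull : mupred κ fstar k (j + 1)
        {y | VV κ c' N xstar fstar (j + 1) y ≠ JJ κ c' N xstar (j + 1) y} = 0 by
      exact ae_iff.mpr hnull
    rw [hbind, Measure.bind_apply hBadm (measurable_kernel hκ).aemeasurable,
      lintegral_eq_zero_iff (hκ.2 _ hBadm)]
    show (fun x => κ x _) =ᵐ[condMeas fstar j (mupred κ fstar k j)] 0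
    unfold condMeas
    apply Measure.ae_smul_measure
    rw [ae_withDensity_iff hfjm]
    filter_upwards [hae] with x hx hfx
    rw [VV_succ κ c' xstar fstar hjN x, JJ_succ κ c' xstar hjN x] at hx
    have hIJle : ∫⁻ y, JJ κ c' N xstar (j + 1) y ∂κ x
        ≤ ∫⁻ y, VV κ c' N xstar fstar (j + 1) y ∂κ x := lintegral_mono hVJle
    have hIV := (forcing ((hfstar j hkj hjN).2 x) hIJle
      (lintegral_JJ_ne_top hκ c' N xstar (j + 1) x) ENNReal.ofReal_ne_top
      ENNReal.ofReal_ne_top hx).2 (pos_iff_ne_zero.mpr hfx)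
    have haex : VV κ c' N xstar fstar (j + 1) =ᵐ[κ x] JJ κ c' N xstar (j + 1) :=
      ae_eq_of_le_of_lintegral_eq hJm hVm hVJle hIV
        (lintegral_JJ_ne_top hκ c' N xstar (j + 1) x)
    exact ae_iff.mp haex


/-- Under Assumption 1 and Hypothesis (H), any jointly optimal policy is
non-degenerate. -/
theorem jointly_optimal_nondegenerate (κ : S → Measure S) (hκ : IsMarkov κ)
    (hA : Assumption1 κ)
    (k N : ℕ) (hkN : k ≤ N) (c' : ℕ → ℝ) (hc' : ∀ j, k ≤ j → j ≤ N → 0 < c' j)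
    (hH : HypH κ c' k N)
    (fstar : ℕ → S → ℝ≥0∞) (xstar : ℕ → S) (hfstar : IsPolicy k N fstar)
    (hopt : ∀ (f : ℕ → S → ℝ≥0∞) (xhat : ℕ → S), IsPolicy k N f →
      Cost κ c' k N xstar fstar ≤ Cost κ c' k N xhat f) :
    NonDeg κ fstar k N := by
  have main : ∀ n, k + n ≤ N →
      IsProbabilityMeasure (mupred κ fstar k (k + n)) ∧
      (∀ (c : S) (δ : ℝ), 0 < δ → 0 < mupred κ fstar k (k + n) {y | dS c y < δ}) ∧
      (VV κ c' N xstar fstar (k + n) =ᵐ[mupred κ fstar k (k + n)] JJ κ c' N xstar (k + n)) := by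
    intro n
    induction n with
    | zero =>
      intro _
      refine ⟨?_, ?_, ?_⟩
      · rw [Nat.add_zero, mupred_self]
        exact hκ.1 origin
      · intro c δ hδ
        rw [Nat.add_zero, mupred_self]
        exact hA.2 _ (dopen_ball c δ) ⟨c, by simpa [dS_self] using hδ⟩ origin
      · rw [Nat.add_zero]
        exact base_ae hκ hkN c' fstar xstar hfstar hopt
    | succ n ih =>
      intro hn1
      have hn : k + n ≤ N := by omega
      obtain ⟨hprob, hpos, hae⟩ := ih hn
      have hq := step_qpos hκ hA hkN c' hH fstar xstar hfstar hopt
        (j := k + n) (by omega) hn hpos hae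
      have hnext := step_next hκ hA c' fstar xstar hfstar
        (j := k + n) (by omega) hn hprob hae hq
      exact hnext
  intro j hkj hjN
  obtain ⟨hprob, hpos, hae⟩ := main (j - k) (by omega)
  rw [show k + (j - k) = j from by omega] at hprob hpos hae
  exact step_qpos hκ hA hkN c' hH fstar xstar hfstar hopt hkj hjN hpos hae

end
end

section
/- Suppose κ satisfies Assumption 1 and Hypothesis (H) holds. Then there exists a compact subset K of S^(N−k+1) (with the product metric) such that for every x̂_{k:N} ∈ S^(N−k+1), inf over ŷ_{k:N} ∈ K of G(ŷ_{k:N}) is at most G(x̂_{k:N}); in particular, if G attains a global minimum, a minimizer can be found in K. -/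
open MeasureTheory Filter
open scoped ENNReal NNReal Topology

noncomputable section

namespace MinCompat

open Real

/-- position norm -/
noncomputable def pn (x : S) : ℝ := |x.1.1| + |x.1.2.1|

lemma dS_nonneg (x y : S) : 0 ≤ dS x y := Real.sqrt_nonneg _

lemma dS_self (x : S) : dS x x = 0 := by simp [dS]

lemma abs_sub_fst_le_dS (x y : S) : |x.1.1 - y.1.1| ≤ dS x y := by
  rw [← Real.sqrt_sq_eq_abs]
  apply Real.sqrt_le_sqrt
  nlinarith [sq_nonneg (x.1.2.1 - y.1.2.1), sq_nonneg (Real.cos x.1.2.2 - Real.cos y.1.2.2),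
    sq_nonneg (Real.sin x.1.2.2 - Real.sin y.1.2.2)]

lemma abs_sub_snd_le_dS (x y : S) : |x.1.2.1 - y.1.2.1| ≤ dS x y := by
  rw [← Real.sqrt_sq_eq_abs]
  apply Real.sqrt_le_sqrt
  nlinarith [sq_nonneg (x.1.1 - y.1.1), sq_nonneg (Real.cos x.1.2.2 - Real.cos y.1.2.2),
    sq_nonneg (Real.sin x.1.2.2 - Real.sin y.1.2.2)]

lemma pn_sub_le (x y : S) : pn x - pn y ≤ 2 * dS x y := by
  have h1 := abs_sub_fst_le_dS x y
  have h2 := abs_sub_snd_le_dS x y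
  have h3 := abs_sub_abs_le_abs_sub x.1.1 y.1.1
  have h4 := abs_sub_abs_le_abs_sub x.1.2.1 y.1.2.1
  unfold pn
  linarith

lemma measurable_dS (a : S) : Measurable fun x : S => dS x a := by
  have h : Measurable fun x : S => (x : ℝ × ℝ × ℝ) := measurable_subtype_coe
  have h1 : Measurable fun x : S => x.1.1 := h.fst
  have h2 : Measurable fun x : S => x.1.2.1 := h.snd.fst
  have h3 : Measurable fun x : S => x.1.2.2 := h.snd.snd
  apply Measurable.sqrt
  apply Measurable.add
  apply Measurable.add
  apply Measurable.add
  · exact (h1.sub measurable_const).pow_const 2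
  · exact (h2.sub measurable_const).pow_const 2
  · exact ((Real.measurable_cos.comp h3).sub measurable_const).pow_const 2 |>.const_mul 2
  · exact ((Real.measurable_sin.comp h3).sub measurable_const).pow_const 2 |>.const_mul 2


noncomputable def KIt (κ : S → Measure S) (B : Set S) : ℕ → S → ℝ≥0∞
  | 0 => B.indicator 1
  | n+1 => fun x => ∫⁻ y, KIt κ B n y ∂(κ x)

lemma KIt_measurable {κ : S → Measure S} (hκm : Measurable κ) {B : Set S}
    (hB : MeasurableSet B) : ∀ n, Measurable (KIt κ B n)
  | 0 => measurable_const.indicator hB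
  | n+1 => (Measure.measurable_lintegral (KIt_measurable hκm hB n)).comp hκm

lemma Jaux_measurable {κ : S → Measure S} (hκm : Measurable κ) (c' : ℕ → ℝ) (xhat : ℕ → S) :
    ∀ m j, Measurable (Jaux κ c' xhat m j)
  | 0, _ => measurable_const
  | m+1, j => by
      simp only [Jaux]
      apply Measurable.min _ measurable_const
      apply Measurable.fun_add
      · exact ((measurable_dS (xhat j)).pow_const 2).ennreal_ofReal
      · exact (Measure.measurable_lintegral (Jaux_measurable hκm c' xhat m (j+1))).comp hκm

lemma Jaux_le {κ : S → Measure S} {c' : ℕ → ℝ} {xhat : ℕ → S} (m j : ℕ) (x : S) :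
    Jaux κ c' xhat (m+1) j x ≤ ENNReal.ofReal (c' j) := min_le_right _ _

lemma Jaux_lower {κ : S → Measure S} {c' : ℕ → ℝ} {xhat : ℕ → S} (m j : ℕ) (x : S) :
    min (ENNReal.ofReal (dS x (xhat j) ^ 2)) (ENNReal.ofReal (c' j))
      ≤ Jaux κ c' xhat (m+1) j x := by
  simp only [Jaux]
  exact min_le_min le_self_add le_rfl

lemma min_add_le (a c e : ℝ≥0∞) : min (a + e) c ≤ min a c + e := by
  rcases le_total a c with h | h
  · rw [min_eq_left h]
    exact le_trans (min_le_left _ _) le_rfl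
  · calc min (a+e) c ≤ c := min_le_right _ _
      _ = min a c := (min_eq_right h).symm
      _ ≤ min a c + e := le_self_add

lemma Jaux_congr {κ : S → Measure S} {c' : ℕ → ℝ} :
    ∀ (m j : ℕ) {x1 x2 : ℕ → S}, (∀ i, j ≤ i → i < j + m → x1 i = x2 i) →
      ∀ x, Jaux κ c' x1 m j x = Jaux κ c' x2 m j x
  | 0, j, x1, x2, h, x => rfl
  | m+1, j, x1, x2, h, x => by
      simp only [Jaux]
      rw [h j le_rfl (by omega)]
      congr 2
      apply lintegral_congr
      intro y
      exact Jaux_congr m (j+1) (fun i h1 h2 => h i (by omega) (by omega)) y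

lemma lint_KIt {κ : S → Measure S} (hκm : Measurable κ) {B : Set S} (hB : MeasurableSet B) :
    ∀ (n : ℕ) (μ : Measure S), ∫⁻ x, KIt κ B n x ∂μ = ((fun ν : Measure S => ν.bind κ)^[n] μ) B
  | 0, μ => lintegral_indicator_one hB
  | n+1, μ => by
      simp only [KIt]
      rw [← Measure.lintegral_bind hκm.aemeasurable (KIt_measurable hκm hB n).aemeasurable,
        lint_KIt hκm hB n (μ.bind κ), Function.iterate_succ_apply]

lemma iterBind_univ {κ : S → Measure S} (hκm : Measurable κ)
    (hp : ∀ x, IsProbabilityMeasure (κ x)) :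
    ∀ (n : ℕ) (μ : Measure S), IsProbabilityMeasure μ →
      ((fun ν : Measure S => ν.bind κ)^[n] μ) Set.univ = 1
  | 0, μ, hμ => hμ.measure_univ
  | n+1, μ, hμ => by
      rw [Function.iterate_succ_apply]
      apply iterBind_univ hκm hp n
      constructor
      rw [Measure.bind_apply MeasurableSet.univ hκm.aemeasurable]
      simp only [measure_univ, lintegral_one, hμ.measure_univ]
lemma Jaux_replace {κ : S → Measure S} (hκm : Measurable κ) (c' : ℕ → ℝ) {z w : ℕ → S}
    {j N : ℕ} (hjN : j ≤ N) (hzw : ∀ i, i < j → w i = z i) (hc : 0 ≤ c' j) :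
    ∀ (n i : ℕ), i + n = j → ∀ x : S,
      Jaux κ c' w (N+1-i) i x ≤ Jaux κ c' z (N+1-i) i x
        + ENNReal.ofReal (c' j) * KIt κ {y : S | dS y (z j) < Real.sqrt (c' j)} n x := by
  intro n
  induction n with
  | zero =>
    intro i hi x
    have hij : i = j := by omega
    subst hij
    have hNj : N + 1 - i = (N - i) + 1 := by omega
    rw [hNj]
    by_cases hx : x ∈ {y : S | dS y (z i) < Real.sqrt (c' i)}
    · have hK : KIt κ {y : S | dS y (z i) < Real.sqrt (c' i)} 0 x = 1 := by
        simp only [KIt, Set.indicator_of_mem hx, Pi.one_apply]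
      rw [hK, mul_one]
      exact le_trans (Jaux_le _ _ _) le_add_self
    · have hd : Real.sqrt (c' i) ≤ dS x (z i) := le_of_not_gt hx
      have hd2 : c' i ≤ dS x (z i) ^ 2 := by
        nlinarith [Real.sq_sqrt hc, Real.sqrt_nonneg (c' i), dS_nonneg x (z i)]
      have : ENNReal.ofReal (c' i) ≤ Jaux κ c' z ((N-i)+1) i x := by
        refine le_trans ?_ (Jaux_lower _ _ _)
        exact le_min (ENNReal.ofReal_le_ofReal hd2) le_rfl
      exact le_trans (Jaux_le _ _ _) (le_trans this le_self_add)
  | succ n ih =>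
    intro i hi x
    have hij : i < j := by omega
    have h1 : N + 1 - i = (N - i) + 1 := by omega
    have h2 : N - i = N + 1 - (i+1) := by omega
    set B := {y : S | dS y (z j) < Real.sqrt (c' j)} with hB
    have hBm : MeasurableSet B := measurableSet_lt (measurable_dS (z j)) measurable_const
    rw [h1]
    simp only [Jaux]
    rw [hzw i hij]
    have hinner : ∫⁻ y, Jaux κ c' w (N-i) (i+1) y ∂(κ x)
        ≤ ∫⁻ y, Jaux κ c' z (N-i) (i+1) y ∂(κ x)
          + ENNReal.ofReal (c' j) * KIt κ B (n+1) x := by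
      have step : ∫⁻ y, Jaux κ c' w (N-i) (i+1) y ∂(κ x)
          ≤ ∫⁻ y, (Jaux κ c' z (N-i) (i+1) y + ENNReal.ofReal (c' j) * KIt κ B n y) ∂(κ x) := by
        apply lintegral_mono
        intro y
        rw [h2]
        exact ih (i+1) (by omega) y
      refine le_trans step ?_
      rw [lintegral_add_left (Jaux_measurable hκm c' z _ _),
        lintegral_const_mul _ (KIt_measurable hκm hBm n)]
      exact le_rfl
    calc min (ENNReal.ofReal (dS x (z i) ^ 2) + ∫⁻ y, Jaux κ c' w (N-i) (i+1) y ∂(κ x))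
          (ENNReal.ofReal (c' i))
        ≤ min ((ENNReal.ofReal (dS x (z i) ^ 2) + ∫⁻ y, Jaux κ c' z (N-i) (i+1) y ∂(κ x))
            + ENNReal.ofReal (c' j) * KIt κ B (n+1) x) (ENNReal.ofReal (c' i)) := by
          refine min_le_min ?_ le_rfl
          rw [add_assoc]
          exact add_le_add_right hinner _
      _ ≤ _ := min_add_le _ _ _
lemma sil (a : ℕ → S) : ∃ φ : ℕ → ℕ, StrictMono φ ∧
    (Tendsto (fun l => pn (a (φ l))) atTop atTop ∨
      ∃ v : S, Tendsto (fun l => dS (a (φ l)) v) atTop (𝓝 0)) := by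
  by_cases h : Tendsto (fun l => pn (a l)) atTop atTop
  · exact ⟨id, strictMono_id, Or.inl h⟩
  · rw [tendsto_atTop] at h
    push_neg at h
    obtain ⟨C, hC⟩ := h
    have hC' : ∃ᶠ l in atTop, pn (a l) < C := hC
    obtain ⟨ψ, hψ, hψC⟩ := Filter.extraction_of_frequently_atTop hC'
    set T : Set (ℝ × ℝ × ℝ) :=
      Set.Icc (-C) C ×ˢ Set.Icc (-C) C ×ˢ Set.Icc 0 (2 * Real.pi) with hT
    have hTc : IsCompact T := (isCompact_Icc.prod (isCompact_Icc.prod isCompact_Icc))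
    have hmem : ∀ n, ((a (ψ n) : ℝ × ℝ × ℝ)) ∈ T := by
      intro n
      have h1 : |(a (ψ n)).1.1| + |(a (ψ n)).1.2.1| < C := hψC n
      have h2 := (a (ψ n)).2
      refine ⟨⟨?_, ?_⟩, ⟨?_, ?_⟩, ⟨h2.1, le_of_lt h2.2⟩⟩
      · nlinarith [abs_nonneg (a (ψ n)).1.1, abs_nonneg (a (ψ n)).1.2.1,
          neg_abs_le (a (ψ n)).1.1]
      · nlinarith [abs_nonneg (a (ψ n)).1.2.1, le_abs_self (a (ψ n)).1.1]
      · nlinarith [abs_nonneg (a (ψ n)).1.1, neg_abs_le (a (ψ n)).1.2.1]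
      · nlinarith [abs_nonneg (a (ψ n)).1.1, le_abs_self (a (ψ n)).1.2.1]
    obtain ⟨p, hpT, ψ₂, hψ₂, hconv⟩ := hTc.tendsto_subseq hmem
    have hp3 : p.2.2 ∈ Set.Icc 0 (2 * Real.pi) := hpT.2.2
    set θv : ℝ := if p.2.2 < 2 * Real.pi then p.2.2 else 0 with hθv
    have hθmem : θv ∈ Set.Ico (0:ℝ) (2 * Real.pi) := by
      rw [hθv]
      split_ifs with hlt
      · exact ⟨hp3.1, hlt⟩
      · exact ⟨le_rfl, by positivity⟩
    have hcos : Real.cos p.2.2 = Real.cos θv := by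
      rw [hθv]; split_ifs with hlt
      · rfl
      · have : p.2.2 = 2 * Real.pi := le_antisymm hp3.2 (le_of_not_gt hlt)
        rw [this, Real.cos_two_pi, Real.cos_zero]
    have hsin : Real.sin p.2.2 = Real.sin θv := by
      rw [hθv]; split_ifs with hlt
      · rfl
      · have : p.2.2 = 2 * Real.pi := le_antisymm hp3.2 (le_of_not_gt hlt)
        rw [this, Real.sin_two_pi, Real.sin_zero]
    set v : S := ⟨(p.1, p.2.1, θv), hθmem⟩ with hv
    refine ⟨ψ ∘ ψ₂, hψ.comp hψ₂, Or.inr ⟨v, ?_⟩⟩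
    have hg : Continuous fun q : ℝ × ℝ × ℝ => Real.sqrt ((q.1 - p.1) ^ 2 + (q.2.1 - p.2.1) ^ 2
        + 2 * (Real.cos q.2.2 - Real.cos θv) ^ 2 + 2 * (Real.sin q.2.2 - Real.sin θv) ^ 2) := by
      fun_prop
    have heq : ∀ l, dS (a (ψ (ψ₂ l))) v
        = (fun q : ℝ × ℝ × ℝ => Real.sqrt ((q.1 - p.1) ^ 2 + (q.2.1 - p.2.1) ^ 2
          + 2 * (Real.cos q.2.2 - Real.cos θv) ^ 2 + 2 * (Real.sin q.2.2 - Real.sin θv) ^ 2))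
          ((a (ψ (ψ₂ l))) : ℝ × ℝ × ℝ) := fun l => rfl
    have hlim : Tendsto (fun l => dS (a (ψ (ψ₂ l))) v) atTop
        (𝓝 (Real.sqrt ((p.1 - p.1) ^ 2 + (p.2.1 - p.2.1) ^ 2
          + 2 * (Real.cos p.2.2 - Real.cos θv) ^ 2 + 2 * (Real.sin p.2.2 - Real.sin θv) ^ 2))) := by
      simp only [heq]
      exact (hg.tendsto p).comp hconv
    have : Real.sqrt ((p.1 - p.1) ^ 2 + (p.2.1 - p.2.1) ^ 2
        + 2 * (Real.cos p.2.2 - Real.cos θv) ^ 2 + 2 * (Real.sin p.2.2 - Real.sin θv) ^ 2) = 0 := by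
      rw [hcos, hsin]
      simp
    rwa [this] at hlim

lemma ext_lemma (s : Finset ℕ) (z : ℕ → ℕ → S) :
    ∃ φ : ℕ → ℕ, StrictMono φ ∧ ∀ i ∈ s,
      (Tendsto (fun l => pn (z (φ l) i)) atTop atTop ∨
        ∃ v : S, Tendsto (fun l => dS (z (φ l) i) v) atTop (𝓝 0)) := by
  classical
  induction s using Finset.induction_on with
  | empty => exact ⟨id, strictMono_id, by simp⟩
  | insert a s ha ih =>
    obtain ⟨φ₁, hφ₁, hprop⟩ := ih
    obtain ⟨φ₂, hφ₂, hprop₂⟩ := sil (fun l => z (φ₁ l) _)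
    refine ⟨φ₁ ∘ φ₂, hφ₁.comp hφ₂, ?_⟩
    intro i hi
    rcases Finset.mem_insert.mp hi with h | h
    · subst h
      exact hprop₂
    · rcases hprop i h with hesc | ⟨v, hv⟩
      · exact Or.inl (hesc.comp hφ₂.tendsto_atTop)
      · exact Or.inr ⟨v, hv.comp hφ₂.tendsto_atTop⟩
lemma compact_insert_range (w : ℕ → ℕ → S) (v : ℕ → S) (k N : ℕ)
    (hconv : ∀ i, k ≤ i → i ≤ N → ∀ ε : ℝ, 0 < ε → ∃ M : ℕ, ∀ l, M ≤ l → dS (w l i) (v i) < ε) :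
    ∀ u : ℕ → (ℕ → S), (∀ n, u n ∈ insert v (Set.range w)) →
      ∃ v' ∈ insert v (Set.range w), ∃ φ : ℕ → ℕ, StrictMono φ ∧
        ∀ j, k ≤ j → j ≤ N → ∀ ε : ℝ, 0 < ε →
          ∃ M : ℕ, ∀ n, M ≤ n → dS (u (φ n) j) (v' j) < ε := by
  classical
  intro u hu
  by_cases hfreq : ∃ y ∈ insert v (Set.range w), ∃ᶠ n in atTop, u n = y
  · obtain ⟨y, hyK, hy⟩ := hfreq
    obtain ⟨φ, hφ, hφy⟩ := Filter.extraction_of_frequently_atTop hy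
    refine ⟨y, hyK, φ, hφ, ?_⟩
    intro j _ _ ε hε
    exact ⟨0, fun n _ => by rw [hφy n, dS_self]; exact hε⟩
  · push_neg at hfreq
    have hfin : ∀ y ∈ insert v (Set.range w), ∀ᶠ n in atTop, u n ≠ y := by
      intro y hy
      have := hfreq y hy
      exact this
    have claim : ∀ L M : ℕ, ∃ n, M ≤ n ∧ ∃ l, L ≤ l ∧ u n = w l := by
      intro L M
      have hev : ∀ᶠ n in atTop, u n ≠ v ∧ ∀ l ∈ Finset.range L, u n ≠ w l := by
        refine (hfin v (Set.mem_insert _ _)).and ?_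
        rw [Filter.eventually_all_finset]
        intro l _
        exact hfin (w l) (Set.mem_insert_of_mem _ ⟨l, rfl⟩)
      obtain ⟨M', hM'⟩ := Filter.eventually_atTop.mp hev
      refine ⟨max M M', le_max_left _ _, ?_⟩
      obtain ⟨hne, hnw⟩ := hM' (max M M') (le_max_right _ _)
      rcases hu (max M M') with h | ⟨l, hl⟩
      · exact absurd h hne
      · refine ⟨l, ?_, hl.symm⟩
        by_contra hlt
        exact hnw l (Finset.mem_range.mpr (lt_of_not_ge hlt)) hl.symm
    -- build the subsequence recursively
    let F : ℕ → ℕ × ℕ := fun i => Nat.rec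
      (⟨(claim 0 0).choose, (claim 0 0).choose_spec.2.choose⟩)
      (fun i p => ⟨(claim (i+1) (p.1+1)).choose, (claim (i+1) (p.1+1)).choose_spec.2.choose⟩) i
    have hF0 : u ((F 0).1) = w ((F 0).2) ∧ 0 ≤ (F 0).2 :=
      ⟨(claim 0 0).choose_spec.2.choose_spec.2, (claim 0 0).choose_spec.2.choose_spec.1⟩
    have hFs : ∀ i, (F i).1 < (F (i+1)).1 ∧ u ((F (i+1)).1) = w ((F (i+1)).2)
        ∧ i + 1 ≤ (F (i+1)).2 := by
      intro i
      have hs := (claim (i+1) ((F i).1+1)).choose_spec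
      exact ⟨lt_of_lt_of_le (Nat.lt_succ_self _) hs.1,
        hs.2.choose_spec.2, hs.2.choose_spec.1⟩
    have hFlow : ∀ i, u ((F i).1) = w ((F i).2) ∧ i ≤ (F i).2 := by
      intro i
      cases i with
      | zero => exact ⟨hF0.1, hF0.2⟩
      | succ i => exact ⟨(hFs i).2.1, (hFs i).2.2⟩
    refine ⟨v, Set.mem_insert _ _, fun i => (F i).1,
      strictMono_nat_of_lt_succ (fun i => (hFs i).1), ?_⟩
    intro j hkj hjN ε hε
    obtain ⟨M, hM⟩ := hconv j hkj hjN ε hε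
    refine ⟨M, fun n hn => ?_⟩
    rw [(hFlow n).1]
    exact hM _ (le_trans hn (hFlow n).2)
end MinCompat


/-- Under Assumption 1 and Hypothesis (H), there is a compact set `K` of estimate
tuples (compactness expressed sequentially for the product metric on the
components `k, …, N`) such that the infimum of `G` over `K` is at most `G(x̂_{k:N})`
for every tuple of estimates. -/
theorem minimizer_in_compact_set (κ : S → Measure S) (hκ : IsMarkov κ)
    (hA : Assumption1 κ)
    (k N : ℕ) (hkN : k ≤ N) (c' : ℕ → ℝ) (hc' : ∀ j, k ≤ j → j ≤ N → 0 < c' j)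
    (hH : HypH κ c' k N) :
    ∃ K : Set (ℕ → S),
      (∀ u : ℕ → (ℕ → S), (∀ n, u n ∈ K) →
        ∃ v ∈ K, ∃ φ : ℕ → ℕ, StrictMono φ ∧
          ∀ j, k ≤ j → j ≤ N → ∀ ε : ℝ, 0 < ε →
            ∃ M : ℕ, ∀ n, M ≤ n → dS (u (φ n) j) (v j) < ε) ∧
      ∀ xhat : ℕ → S,
        (⨅ (y : ℕ → S) (_ : y ∈ K), Gtot κ c' k N y) ≤ Gtot κ c' k N xhat := by
  classical
  have hκm : Measurable κ := Measure.measurable_of_measurable_coe κ (fun A hA => hκ.2 A hA)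
  haveI : IsProbabilityMeasure (κ origin) := hκ.1 origin
  set b : ℝ≥0∞ := ⨅ y : ℕ → S, Gtot κ c' k N y with hb
  have hGle : ∀ y : ℕ → S, Gtot κ c' k N y ≤ ENNReal.ofReal (c' k) := by
    intro y
    have hsucc : N + 1 - k = (N - k) + 1 := by omega
    show ∫⁻ x, Jaux κ c' y (N + 1 - k) k x ∂(κ origin) ≤ _
    rw [hsucc]
    calc ∫⁻ x, Jaux κ c' y ((N - k) + 1) k x ∂(κ origin)
        ≤ ∫⁻ _, ENNReal.ofReal (c' k) ∂(κ origin) :=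
          lintegral_mono (fun x => MinCompat.Jaux_le _ _ _)
      _ = ENNReal.ofReal (c' k) := by simp [lintegral_const, measure_univ]
  have hbtop : b ≠ ⊤ :=
    ne_top_of_le_ne_top ENNReal.ofReal_ne_top
      (le_trans (iInf_le _ (fun _ => origin)) (hGle _))
  have hz : ∀ l : ℕ, ∃ zl : ℕ → S, Gtot κ c' k N zl < b + (((l+1 : ℕ)) : ℝ≥0∞)⁻¹ := by
    intro l
    have hpos : (((l+1 : ℕ)) : ℝ≥0∞)⁻¹ ≠ 0 :=
      ENNReal.inv_ne_zero.mpr (ENNReal.natCast_ne_top _)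
    have hlt : b < b + (((l+1 : ℕ)) : ℝ≥0∞)⁻¹ := ENNReal.lt_add_right hbtop hpos
    rw [hb] at hlt
    exact iInf_lt_iff.mp hlt
  choose z hzs using hz
  obtain ⟨φ, hφ, hdi⟩ := MinCompat.ext_lemma (Finset.Icc k N) z
  set F : Finset ℕ := (Finset.Icc k N).filter
    (fun i => Tendsto (fun l => MinCompat.pn (z (φ l) i)) atTop atTop) with hF
  set j : ℕ := if hFn : F.Nonempty then F.min' hFn else N + 1 with hj
  have hjlt : ∀ i, i < j → i ∉ F := by
    intro i hij hiF
    have hFn : F.Nonempty := ⟨i, hiF⟩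
    rw [hj, dif_pos hFn] at hij
    exact absurd (F.min'_le i hiF) (not_le.mpr hij)
  have hnotF : ∀ i ∈ Finset.Icc k N, i < j →
      ∃ v : S, Tendsto (fun l => dS (z (φ l) i) v) atTop (𝓝 0) := by
    intro i hi hij
    rcases hdi i hi with h | h
    · exact absurd (Finset.mem_filter.mpr ⟨hi, h⟩) (hjlt i hij)
    · exact h
  set wfun : ℕ → ℕ → S := fun l i => if i < j then z (φ l) i else origin with hwfun
  have hvex : ∀ i : ℕ, ∃ vi : S, (i ∈ Finset.Icc k N → i < j →
      Tendsto (fun l => dS (z (φ l) i) vi) atTop (𝓝 0)) := by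
    intro i
    by_cases h : i ∈ Finset.Icc k N ∧ i < j
    · obtain ⟨vi, hvi⟩ := hnotF i h.1 h.2
      exact ⟨vi, fun _ _ => hvi⟩
    · exact ⟨origin, fun h1 h2 => absurd ⟨h1, h2⟩ h⟩
  choose vpre hvpre using hvex
  set vfun : ℕ → S := fun i => if i < j then vpre i else origin with hvfun
  have hconv : ∀ i, k ≤ i → i ≤ N → ∀ ε : ℝ, 0 < ε →
      ∃ M : ℕ, ∀ l, M ≤ l → dS (wfun l i) (vfun i) < ε := by
    intro i hki hiN ε hε
    by_cases hij : i < j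
    · have htd := hvpre i (Finset.mem_Icc.mpr ⟨hki, hiN⟩) hij
      have hev : ∀ᶠ l in atTop, dS (z (φ l) i) (vpre i) < ε :=
        htd.eventually (Filter.Tendsto.eventually_lt_const hε tendsto_id)
      obtain ⟨M, hM⟩ := Filter.eventually_atTop.mp hev
      refine ⟨M, fun l hl => ?_⟩
      simp only [hwfun, hvfun, if_pos hij]
      exact hM l hl
    · refine ⟨0, fun l _ => ?_⟩
      simp only [hwfun, hvfun, if_neg hij]
      rw [MinCompat.dS_self]
      exact hε
  refine ⟨insert vfun (Set.range wfun),
    MinCompat.compact_insert_range wfun vfun k N hconv, ?_⟩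
  intro xhat
  refine le_trans ?_ (iInf_le _ xhat)
  -- suffices to show inf over K ≤ b
  have hinf_le_w : ∀ l, (⨅ (y : ℕ → S) (_ : y ∈ insert vfun (Set.range wfun)),
      Gtot κ c' k N y) ≤ Gtot κ c' k N (wfun l) :=
    fun l => iInf₂_le (wfun l) (Set.mem_insert_of_mem _ (Set.mem_range_self l))
  have hinv : Tendsto (fun l : ℕ => (((l+1 : ℕ)) : ℝ≥0∞)⁻¹) atTop (𝓝 0) :=
    ENNReal.tendsto_inv_nat_nhds_zero.comp (tendsto_add_atTop_nat 1)
  have hzφ : ∀ l, Gtot κ c' k N (z (φ l)) ≤ b + (((l+1 : ℕ)) : ℝ≥0∞)⁻¹ := by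
    intro l
    refine le_trans (hzs (φ l)).le (add_le_add le_rfl ?_)
    refine ENNReal.inv_le_inv.mpr ?_
    exact_mod_cast Nat.succ_le_succ (hφ.le_apply)
  by_cases hFn : F.Nonempty
  · -- replaced case
    have hjdef : j = F.min' hFn := by rw [hj, dif_pos hFn]
    have hjF : j ∈ F := by rw [hjdef]; exact F.min'_mem hFn
    have hjIcc : j ∈ Finset.Icc k N := (Finset.mem_filter.mp hjF).1
    obtain ⟨hkj, hjN⟩ := Finset.mem_Icc.mp hjIcc
    have hcj : 0 < c' j := hc' j hkj hjN
    have hesc : Tendsto (fun l => MinCompat.pn (z (φ l) j)) atTop atTop :=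
      (Finset.mem_filter.mp hjF).2
    set nu : Measure S := (fun ν : Measure S => ν.bind κ)^[j - k] (κ origin) with hnu
    set Bl : ℕ → Set S := fun l => {y : S | dS y (z (φ l) j) < Real.sqrt (c' j)} with hBl
    have hBm : ∀ l, MeasurableSet (Bl l) :=
      fun l => measurableSet_lt (MinCompat.measurable_dS _) measurable_const
    have hGw : ∀ l, Gtot κ c' k N (wfun l)
        ≤ Gtot κ c' k N (z (φ l)) + ENNReal.ofReal (c' j) * nu (Bl l) := by
      intro l
      have hrep := MinCompat.Jaux_replace hκm c' (z := z (φ l)) (w := wfun l) hjN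
        (fun i hi => by simp only [hwfun, if_pos hi]) hcj.le (j - k) k (by omega)
      show ∫⁻ x, Jaux κ c' (wfun l) (N + 1 - k) k x ∂(κ origin) ≤ _
      calc ∫⁻ x, Jaux κ c' (wfun l) (N + 1 - k) k x ∂(κ origin)
          ≤ ∫⁻ x, (Jaux κ c' (z (φ l)) (N + 1 - k) k x
              + ENNReal.ofReal (c' j) * MinCompat.KIt κ (Bl l) (j - k) x) ∂(κ origin) :=
            lintegral_mono (fun x => hrep x)
        _ = ∫⁻ x, Jaux κ c' (z (φ l)) (N + 1 - k) k x ∂(κ origin)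
              + ENNReal.ofReal (c' j) * ∫⁻ x, MinCompat.KIt κ (Bl l) (j - k) x ∂(κ origin) := by
            rw [lintegral_add_left (MinCompat.Jaux_measurable hκm c' _ _ _),
              lintegral_const_mul _ (MinCompat.KIt_measurable hκm (hBm l) _)]
        _ = _ := by rw [MinCompat.lint_KIt hκm (hBm l) (j - k) (κ origin)]; rfl
    have hnuuniv : nu Set.univ = 1 :=
      MinCompat.iterBind_univ hκm hκ.1 (j - k) (κ origin) (hκ.1 origin)
    have htight : Tendsto (fun l => nu (Bl l)) atTop (𝓝 0) := by
      rw [ENNReal.tendsto_nhds_zero]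
      intro ε hε
      have hCm : ∀ m : ℕ, MeasurableSet {x : S | (m : ℝ) ≤ MinCompat.pn x} := by
        intro m
        have hpm : Measurable MinCompat.pn := by
          have h : Measurable fun x : S => (x : ℝ × ℝ × ℝ) := measurable_subtype_coe
          exact (h.fst.abs).add (h.snd.fst.abs)
        exact measurableSet_le measurable_const hpm
      have hanti : Antitone (fun m : ℕ => {x : S | (m : ℝ) ≤ MinCompat.pn x}) := by
        intro m m' hmm' x hx
        have hc : (m : ℝ) ≤ (m' : ℝ) := by exact_mod_cast hmm'
        exact le_trans hc hx
      have hiter : Tendsto (fun m : ℕ => nu {x : S | (m : ℝ) ≤ MinCompat.pn x}) atTop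
          (𝓝 (nu (⋂ m : ℕ, {x : S | (m : ℝ) ≤ MinCompat.pn x}))) := by
        refine tendsto_measure_iInter_atTop (fun m => (hCm m).nullMeasurableSet) hanti ?_
        exact ⟨0, ne_top_of_le_ne_top (by rw [hnuuniv]; exact ENNReal.one_ne_top)
          (measure_mono (Set.subset_univ _))⟩
      have hempty : (⋂ m : ℕ, {x : S | (m : ℝ) ≤ MinCompat.pn x}) = ∅ := by
        ext x
        simp only [Set.mem_iInter, Set.mem_setOf_eq, Set.mem_empty_iff_false, iff_false,
          not_forall, not_le]
        obtain ⟨m, hm⟩ := exists_nat_gt (MinCompat.pn x)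
        exact ⟨m, hm⟩
      rw [hempty, measure_empty] at hiter
      obtain ⟨m, hm⟩ := Filter.eventually_atTop.mp
        (ENNReal.tendsto_nhds_zero.mp hiter ε hε)
      have hmε : nu {x : S | ((m : ℝ)) ≤ MinCompat.pn x} ≤ ε := hm m le_rfl
      filter_upwards [hesc.eventually_ge_atTop ((m : ℝ) + 2 * Real.sqrt (c' j))] with l hl
      refine le_trans (measure_mono ?_) hmε
      intro x hx
      have hxd : dS x (z (φ l) j) < Real.sqrt (c' j) := hx
      have hp := MinCompat.pn_sub_le (z (φ l) j) x
      have hdcomm : dS (z (φ l) j) x = dS x (z (φ l) j) := by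
        unfold dS; ring_nf
      rw [hdcomm] at hp
      show (m : ℝ) ≤ MinCompat.pn x
      nlinarith [Real.sqrt_nonneg (c' j)]
    have hchain : ∀ l, (⨅ (y : ℕ → S) (_ : y ∈ insert vfun (Set.range wfun)),
        Gtot κ c' k N y) ≤ b + (((l+1 : ℕ)) : ℝ≥0∞)⁻¹
          + ENNReal.ofReal (c' j) * nu (Bl l) := by
      intro l
      exact le_trans (hinf_le_w l) (le_trans (hGw l) (add_le_add (hzφ l) le_rfl))
    have htend : Tendsto (fun l => b + (((l+1 : ℕ)) : ℝ≥0∞)⁻¹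
        + ENNReal.ofReal (c' j) * nu (Bl l)) atTop (𝓝 (b + 0 + ENNReal.ofReal (c' j) * 0)) :=
      ((tendsto_const_nhds.add hinv).add
        (ENNReal.Tendsto.const_mul htight (Or.inr ENNReal.ofReal_ne_top)))
    rw [add_zero, mul_zero, add_zero] at htend
    exact ge_of_tendsto' htend hchain
  · -- no replacement case
    have hjdef : j = N + 1 := by rw [hj, dif_neg hFn]
    have hGeq : ∀ l, Gtot κ c' k N (wfun l) = Gtot κ c' k N (z (φ l)) := by
      intro l
      show ∫⁻ x, Jaux κ c' (wfun l) (N + 1 - k) k x ∂(κ origin)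
        = ∫⁻ x, Jaux κ c' (z (φ l)) (N + 1 - k) k x ∂(κ origin)
      apply lintegral_congr
      intro x
      refine MinCompat.Jaux_congr (N + 1 - k) k (fun i hi1 hi2 => ?_) x
      have : i < j := by omega
      simp only [hwfun, if_pos this]
    have hchain : ∀ l, (⨅ (y : ℕ → S) (_ : y ∈ insert vfun (Set.range wfun)),
        Gtot κ c' k N y) ≤ b + (((l+1 : ℕ)) : ℝ≥0∞)⁻¹ := by
      intro l
      refine le_trans (hinf_le_w l) ?_
      rw [hGeq l]
      exact hzφ l
    have htend : Tendsto (fun l : ℕ => b + (((l+1 : ℕ)) : ℝ≥0∞)⁻¹) atTop (𝓝 (b + 0)) :=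
      tendsto_const_nhds.add hinv
    rw [add_zero] at htend
    exact ge_of_tendsto' htend hchain

end
end

section
/- Suppose κ satisfies Assumption 1 and Hypothesis (H) holds. Then there exist a randomized policy f*_{k:N} and estimates x̂*_{k:N} ∈ S^(N−k+1) that are jointly optimal: C(f*_{k:N}, x̂*_{k:N}) ≤ C(f_{k:N}, x̂_{k:N}) for every randomized policy f_{k:N} and every x̂_{k:N} ∈ S^(N−k+1). Moreover, x̂*_{k:N} can be taken to be a global minimizer of G over S^(N−k+1), and then C(f*_{k:N}, x̂*_{k:N}) = G(x̂*_{k:N}). -/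
open MeasureTheory Filter
open scoped ENNReal NNReal Topology

noncomputable section

namespace OS

instance : OpensMeasurableSpace S :=
  Subtype.opensMeasurableSpace {x : ℝ × ℝ × ℝ | x.2.2 ∈ Set.Ico (0 : ℝ) (2 * Real.pi)}

instance : BorelSpace S :=
  Subtype.borelSpace {x : ℝ × ℝ × ℝ | x.2.2 ∈ Set.Ico (0 : ℝ) (2 * Real.pi)}

lemma dS_nonneg (x y : S) : 0 ≤ dS x y := Real.sqrt_nonneg _

def E4 (x : S) : EuclideanSpace ℝ (Fin 4) :=
  WithLp.toLp 2 ![x.1.1, x.1.2.1, Real.sqrt 2 * Real.cos x.1.2.2, Real.sqrt 2 * Real.sin x.1.2.2]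

lemma dS_eq_dist (x y : S) : dS x y = dist (E4 x) (E4 y) := by
  rw [EuclideanSpace.dist_eq]
  unfold dS E4
  congr 1
  rw [Fin.sum_univ_four]
  simp only [PiLp.toLp_apply, Matrix.cons_val_zero, Matrix.cons_val_one, Matrix.head_cons,
    Matrix.cons_val_two, Matrix.tail_cons, Matrix.cons_val_three]
  simp only [Real.dist_eq, sq_abs]
  have h2 : Real.sqrt 2 ^ 2 = 2 := Real.sq_sqrt (by norm_num)
  linear_combination (-((Real.cos x.1.2.2 - Real.cos y.1.2.2) ^ 2 + (Real.sin x.1.2.2 - Real.sin y.1.2.2) ^ 2)) * h2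

lemma dS_self (x : S) : dS x x = 0 := by rw [dS_eq_dist]; simp

lemma dS_comm (x y : S) : dS x y = dS y x := by rw [dS_eq_dist, dS_eq_dist, dist_comm]

lemma dS_triangle (x y z : S) : dS x z ≤ dS x y + dS y z := by
  rw [dS_eq_dist, dS_eq_dist, dS_eq_dist]; exact dist_triangle _ _ _

lemma continuous_dS_right (c : S) : Continuous fun x : S => dS c x := by
  unfold dS
  fun_prop

lemma continuous_dS_left (c : S) : Continuous fun x : S => dS x c := by
  simp only [fun x => dS_comm x c]; exact continuous_dS_right c

lemma abs_le_dS_origin₁ (x : S) : |x.1.1| ≤ dS origin x := by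
  rw [dS_comm]
  unfold dS
  rw [← Real.sqrt_sq_eq_abs]
  apply Real.sqrt_le_sqrt
  have e1 : ((origin : S) : ℝ × ℝ × ℝ).1 = 0 := rfl
  rw [e1]
  nlinarith [sq_nonneg (x.1.2.1 - ((origin:S):ℝ×ℝ×ℝ).2.1), sq_nonneg (Real.cos x.1.2.2 - Real.cos ((origin:S):ℝ×ℝ×ℝ).2.2), sq_nonneg (Real.sin x.1.2.2 - Real.sin ((origin:S):ℝ×ℝ×ℝ).2.2)]

lemma abs_le_dS_origin₂ (x : S) : |x.1.2.1| ≤ dS origin x := by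
  rw [dS_comm]
  unfold dS
  rw [← Real.sqrt_sq_eq_abs]
  apply Real.sqrt_le_sqrt
  have e1 : ((origin : S) : ℝ × ℝ × ℝ).2.1 = 0 := rfl
  rw [e1]
  nlinarith [sq_nonneg (x.1.1 - ((origin:S):ℝ×ℝ×ℝ).1), sq_nonneg (Real.cos x.1.2.2 - Real.cos ((origin:S):ℝ×ℝ×ℝ).2.2), sq_nonneg (Real.sin x.1.2.2 - Real.sin ((origin:S):ℝ×ℝ×ℝ).2.2)]

end OS

namespace OS

lemma abs_cos_sub_cos_le (a b : ℝ) : |Real.cos a - Real.cos b| ≤ |a - b| := by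
  rw [Real.cos_sub_cos]
  rw [abs_mul, abs_mul, abs_neg]
  have h1 : |Real.sin ((a + b) / 2)| ≤ 1 := Real.abs_sin_le_one _
  have h2 : |Real.sin ((a - b) / 2)| ≤ |(a - b) / 2| := Real.abs_sin_le_abs
  have h3 : |(2:ℝ)| = 2 := by norm_num
  rw [h3]
  calc 2 * |Real.sin ((a + b) / 2)| * |Real.sin ((a - b) / 2)|
      ≤ 2 * 1 * |(a - b) / 2| := by
        apply mul_le_mul _ h2 (abs_nonneg _) (by norm_num)
        nlinarith [abs_nonneg (Real.sin ((a+b)/2))]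
    _ = |a - b| := by rw [abs_div]; simp [h3]; ring

lemma abs_sin_sub_sin_le (a b : ℝ) : |Real.sin a - Real.sin b| ≤ |a - b| := by
  rw [Real.sin_sub_sin]
  rw [abs_mul, abs_mul]
  have h1 : |Real.cos ((a + b) / 2)| ≤ 1 := Real.abs_cos_le_one _
  have h2 : |Real.sin ((a - b) / 2)| ≤ |(a - b) / 2| := Real.abs_sin_le_abs
  have h3 : |(2:ℝ)| = 2 := by norm_num
  rw [h3]
  calc 2 * |Real.sin ((a - b) / 2)| * |Real.cos ((a + b) / 2)|
      ≤ 2 * |(a - b) / 2| * 1 := by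
        apply mul_le_mul _ h1 (abs_nonneg _) (by positivity)
        nlinarith [abs_nonneg (Real.sin ((a-b)/2))]
    _ = |a - b| := by rw [abs_div]; simp [h3]; ring

/-- wrap a real triple into `S`. -/
def pmap (u : ℝ × ℝ × ℝ) : S :=
  ⟨(u.1, u.2.1, toIcoMod Real.two_pi_pos 0 u.2.2),
    by simpa using toIcoMod_mem_Ico' Real.two_pi_pos u.2.2⟩

lemma cos_pmap (u : ℝ × ℝ × ℝ) : Real.cos ((pmap u : ℝ × ℝ × ℝ).2.2) = Real.cos u.2.2 := by
  show Real.cos (toIcoMod Real.two_pi_pos 0 u.2.2) = _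
  unfold toIcoMod
  rw [zsmul_eq_mul]
  exact Real.cos_sub_int_mul_two_pi _ _

lemma sin_pmap (u : ℝ × ℝ × ℝ) : Real.sin ((pmap u : ℝ × ℝ × ℝ).2.2) = Real.sin u.2.2 := by
  show Real.sin (toIcoMod Real.two_pi_pos 0 u.2.2) = _
  unfold toIcoMod
  rw [zsmul_eq_mul]
  exact Real.sin_sub_int_mul_two_pi _ _

def ump (x : S) : ℝ × ℝ × ℝ := ((x : ℝ × ℝ × ℝ).1, (x : ℝ × ℝ × ℝ).2.1, (x : ℝ × ℝ × ℝ).2.2)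

lemma pmap_ump (x : S) : pmap (ump x) = x := by
  have h : toIcoMod Real.two_pi_pos 0 (x : ℝ × ℝ × ℝ).2.2 = (x : ℝ × ℝ × ℝ).2.2 := by
    rw [toIcoMod_eq_self]
    simpa using x.2
  apply Subtype.ext
  show ((ump x).1, (ump x).2.1, toIcoMod Real.two_pi_pos 0 (ump x).2.2) = _
  unfold ump
  simp [h]

lemma dS_pmap_le (a b : ℝ × ℝ × ℝ) :
    dS (pmap a) (pmap b) ≤
      Real.sqrt ((a.1 - b.1) ^ 2 + (a.2.1 - b.2.1) ^ 2 + 4 * (a.2.2 - b.2.2) ^ 2) := by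
  unfold dS
  apply Real.sqrt_le_sqrt
  have hc : ((pmap a : ℝ × ℝ × ℝ)).1 = a.1 := rfl
  have hc2 : ((pmap a : ℝ × ℝ × ℝ)).2.1 = a.2.1 := rfl
  have hb : ((pmap b : ℝ × ℝ × ℝ)).1 = b.1 := rfl
  have hb2 : ((pmap b : ℝ × ℝ × ℝ)).2.1 = b.2.1 := rfl
  rw [hc, hc2, hb, hb2, cos_pmap, cos_pmap, sin_pmap, sin_pmap]
  have h1 : (Real.cos a.2.2 - Real.cos b.2.2) ^ 2 ≤ (a.2.2 - b.2.2) ^ 2 := by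
    have := abs_cos_sub_cos_le a.2.2 b.2.2
    nlinarith [abs_nonneg (Real.cos a.2.2 - Real.cos b.2.2), sq_abs (Real.cos a.2.2 - Real.cos b.2.2), sq_abs (a.2.2 - b.2.2)]
  have h2 : (Real.sin a.2.2 - Real.sin b.2.2) ^ 2 ≤ (a.2.2 - b.2.2) ^ 2 := by
    have := abs_sin_sub_sin_le a.2.2 b.2.2
    nlinarith [abs_nonneg (Real.sin a.2.2 - Real.sin b.2.2), sq_abs (Real.sin a.2.2 - Real.sin b.2.2), sq_abs (a.2.2 - b.2.2)]
  linarith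

end OS


namespace OS

/-! ### Kernel measurability helpers -/

variable {κ : S → Measure S} {c' : ℕ → ℝ}

lemma kmeas (hκ : IsMarkov κ) : Measurable κ :=
  Measure.measurable_of_measurable_coe κ (fun s hs => hκ.2 s hs)

lemma measurable_kint (hκ : IsMarkov κ) {f : S → ℝ≥0∞} (hf : Measurable f) :
    Measurable fun x => ∫⁻ y, f y ∂(κ x) :=
  (Measure.measurable_lintegral hf).comp (kmeas hκ)

lemma measurable_dSsq (c : S) : Measurable fun x : S => ENNReal.ofReal (dS x c ^ 2) :=
  ENNReal.measurable_ofReal.comp (((continuous_dS_left c).pow 2).measurable)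

lemma measurable_Jaux (hκ : IsMarkov κ) (xhat : ℕ → S) (m j : ℕ) :
    Measurable (Jaux κ c' xhat m j) := by
  induction m generalizing j with
  | zero => simpa [Jaux] using measurable_const
  | succ m ih =>
    show Measurable fun x => min (ENNReal.ofReal (dS x (xhat j) ^ 2)
        + ∫⁻ y, Jaux κ c' xhat m (j + 1) y ∂(κ x)) (ENNReal.ofReal (c' j))
    exact (((measurable_dSsq (xhat j)).add (measurable_kint hκ (ih (j+1))))).min measurable_const

/-! ### The flagged recursion `JT` -/

/-- value recursion where only stages in `U` are "active". -/
noncomputable def JT (κ : S → Measure S) (c' : ℕ → ℝ) (U : Finset ℕ) (xhat : ℕ → S) :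
    ℕ → ℕ → S → ℝ≥0∞
  | 0, _, _ => 0
  | m + 1, j, x =>
      if j ∈ U then
        min (ENNReal.ofReal (dS x (xhat j) ^ 2) + ∫⁻ y, JT κ c' U xhat m (j + 1) y ∂(κ x))
          (ENNReal.ofReal (c' j))
      else ENNReal.ofReal (c' j)

lemma measurable_JT (hκ : IsMarkov κ) (U : Finset ℕ) (xhat : ℕ → S) (m j : ℕ) :
    Measurable (JT κ c' U xhat m j) := by
  induction m generalizing j with
  | zero => simpa [JT] using measurable_const
  | succ m ih =>
    show Measurable fun x => if j ∈ U then _ else _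
    by_cases h : j ∈ U <;> simp only [h, if_true, if_false]
    · exact (((measurable_dSsq (xhat j)).add (measurable_kint hκ (ih (j+1))))).min
        measurable_const
    · exact measurable_const

lemma JT_eq_Jaux (U : Finset ℕ) (xhat : ℕ → S) (m j : ℕ)
    (h : ∀ i, j ≤ i → i < j + m → i ∈ U) (x : S) :
    JT κ c' U xhat m j x = Jaux κ c' xhat m j x := by
  induction m generalizing j x with
  | zero => rfl
  | succ m ih =>
    have hj : j ∈ U := h j le_rfl (by omega)
    show (if j ∈ U then _ else _) = _
    rw [if_pos hj]
    show min (_ + ∫⁻ y, JT κ c' U xhat m (j + 1) y ∂(κ x)) _ = min (_ + ∫⁻ y, Jaux κ c' xhat m (j + 1) y ∂(κ x)) _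
    congr 2
    apply lintegral_congr
    intro y
    exact ih (j+1) (fun i h1 h2 => h i (by omega) (by omega)) y

lemma JT_le (U : Finset ℕ) (xhat : ℕ → S) (m j : ℕ) (x : S) :
    JT κ c' U xhat (m + 1) j x ≤ ENNReal.ofReal (c' j) := by
  show (if j ∈ U then _ else _) ≤ _
  by_cases h : j ∈ U
  · rw [if_pos h]; exact min_le_right _ _
  · rw [if_neg h]

lemma JT_anti (U V : Finset ℕ) (hUV : U ⊆ V) (xhat : ℕ → S) (m j : ℕ) (x : S) :
    JT κ c' V xhat m j x ≤ JT κ c' U xhat m j x := by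
  induction m generalizing j x with
  | zero => exact le_rfl
  | succ m ih =>
    by_cases h : j ∈ U
    · show (if j ∈ V then _ else _) ≤ (if j ∈ U then _ else _)
      rw [if_pos (hUV h), if_pos h]
      apply min_le_min _ le_rfl
      apply add_le_add_right
      exact lintegral_mono fun y => ih (j+1) y
    · show (if j ∈ V then _ else _) ≤ (if j ∈ U then _ else _)
      rw [if_neg h]
      by_cases hv : j ∈ V
      · rw [if_pos hv]; exact min_le_right _ _
      · rw [if_neg hv]

lemma min_add_le {a b c : ℝ≥0∞} : min (a + b) c ≤ min a c + b := by
  rcases le_total a c with h | h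
  · exact le_trans (min_le_left _ _) (by rw [min_eq_left h])
  · calc min (a + b) c ≤ c := min_le_right _ _
      _ ≤ min a c + b := le_add_right (by rw [min_eq_right h])

end OS


namespace OS

variable {κ : S → Measure S} {c' : ℕ → ℝ}

/-- modulus term. -/
noncomputable def wE (c' : ℕ → ℝ) (xhat yhat : ℕ → S) (i : ℕ) : ℝ≥0∞ :=
  ENNReal.ofReal ((2 * Real.sqrt (c' i) + dS (xhat i) (yhat i)) * dS (xhat i) (yhat i))

lemma wE_self (c' : ℕ → ℝ) (xhat : ℕ → S) (i : ℕ) : wE c' xhat xhat i = 0 := by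
  unfold wE; rw [dS_self]; simp

lemma JT_modulus (hκ : IsMarkov κ) (U : Finset ℕ) (xhat yhat : ℕ → S) (m j : ℕ) (x : S) :
    JT κ c' U xhat m j x ≤ JT κ c' U yhat m j x
      + ∑ i ∈ (Finset.Ico j (j + m)) ∩ U, wE c' xhat yhat i := by
  induction m generalizing j x with
  | zero => simp [JT]
  | succ m ih =>
    have hins : Finset.Ico j (j + (m + 1)) = insert j (Finset.Ico (j + 1) (j + (m + 1))) :=
      (Finset.insert_Ico_add_one_left_eq_Ico (by omega)).symm
    have hset : Finset.Ico (j + 1) (j + 1 + m) = Finset.Ico (j + 1) (j + (m + 1)) := by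
      congr 1; omega
    by_cases hj : j ∈ U
    · have hnotmem : j ∉ Finset.Ico (j + 1) (j + (m + 1)) ∩ U := by
        simp [Finset.mem_inter, Finset.mem_Ico]
      have hsum : ∑ i ∈ (Finset.Ico j (j + (m + 1))) ∩ U, wE c' xhat yhat i
          = wE c' xhat yhat j + ∑ i ∈ (Finset.Ico (j + 1) (j + (m + 1))) ∩ U, wE c' xhat yhat i := by
        rw [hins, Finset.insert_inter_of_mem hj, Finset.sum_insert hnotmem]
      set Ssum := ∑ i ∈ (Finset.Ico (j + 1) (j + (m + 1))) ∩ U, wE c' xhat yhat i with hSsum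
      have hI : (∫⁻ y, JT κ c' U xhat m (j + 1) y ∂(κ x))
          ≤ (∫⁻ y, JT κ c' U yhat m (j + 1) y ∂(κ x)) + Ssum := by
        have h1 : (∫⁻ y, JT κ c' U xhat m (j + 1) y ∂(κ x))
            ≤ ∫⁻ y, JT κ c' U yhat m (j + 1) y + Ssum ∂(κ x) := by
          apply lintegral_mono
          intro y
          calc JT κ c' U xhat m (j + 1) y
              ≤ JT κ c' U yhat m (j + 1) y
                + ∑ i ∈ (Finset.Ico (j + 1) (j + 1 + m)) ∩ U, wE c' xhat yhat i := ih (j + 1) y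
            _ = JT κ c' U yhat m (j + 1) y + Ssum := by rw [hset]
        calc (∫⁻ y, JT κ c' U xhat m (j + 1) y ∂(κ x))
            ≤ ∫⁻ y, JT κ c' U yhat m (j + 1) y + Ssum ∂(κ x) := h1
          _ = (∫⁻ y, JT κ c' U yhat m (j + 1) y ∂(κ x)) + Ssum * (κ x) Set.univ := by
              rw [lintegral_add_right _ measurable_const, lintegral_const]
          _ = (∫⁻ y, JT κ c' U yhat m (j + 1) y ∂(κ x)) + Ssum := by
              have := hκ.1 x
              rw [measure_univ, mul_one]
      show (if j ∈ U then _ else _) ≤ (if j ∈ U then _ else _) + _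
      rw [if_pos hj, if_pos hj, hsum]
      by_cases hd : c' j ≤ dS x (yhat j) ^ 2
      · have hmr : min (ENNReal.ofReal (dS x (yhat j) ^ 2)
            + ∫⁻ y, JT κ c' U yhat m (j + 1) y ∂(κ x)) (ENNReal.ofReal (c' j))
            = ENNReal.ofReal (c' j) := by
          apply min_eq_right
          calc ENNReal.ofReal (c' j) ≤ ENNReal.ofReal (dS x (yhat j) ^ 2) :=
                ENNReal.ofReal_le_ofReal hd
            _ ≤ _ := le_self_add
        rw [hmr]
        exact le_trans (min_le_right _ _) le_self_add
      · have hd' : dS x (yhat j) < Real.sqrt (c' j) :=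
          (Real.lt_sqrt (dS_nonneg _ _)).2 (lt_of_not_ge hd)
        have htri : dS x (xhat j) ≤ dS x (yhat j) + dS (xhat j) (yhat j) := by
          calc dS x (xhat j) ≤ dS x (yhat j) + dS (yhat j) (xhat j) := dS_triangle _ _ _
            _ = dS x (yhat j) + dS (xhat j) (yhat j) := by rw [dS_comm (yhat j)]
        have hreal : dS x (xhat j) ^ 2 ≤ dS x (yhat j) ^ 2
            + (2 * Real.sqrt (c' j) + dS (xhat j) (yhat j)) * dS (xhat j) (yhat j) := by
          nlinarith [dS_nonneg x (yhat j), dS_nonneg (xhat j) (yhat j), dS_nonneg x (xhat j)]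
        have hofr : ENNReal.ofReal (dS x (xhat j) ^ 2)
            ≤ ENNReal.ofReal (dS x (yhat j) ^ 2) + wE c' xhat yhat j := by
          unfold wE
          rw [← ENNReal.ofReal_add (by positivity)]
          · exact ENNReal.ofReal_le_ofReal hreal
          · nlinarith [dS_nonneg x (yhat j), dS_nonneg (xhat j) (yhat j), hd'.le,
              Real.sqrt_nonneg (c' j)]
        calc min (ENNReal.ofReal (dS x (xhat j) ^ 2)
              + ∫⁻ y, JT κ c' U xhat m (j + 1) y ∂(κ x)) (ENNReal.ofReal (c' j))
            ≤ min ((ENNReal.ofReal (dS x (yhat j) ^ 2) + wE c' xhat yhat j)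
              + ((∫⁻ y, JT κ c' U yhat m (j + 1) y ∂(κ x)) + Ssum)) (ENNReal.ofReal (c' j)) :=
              min_le_min (add_le_add hofr hI) le_rfl
          _ = min ((ENNReal.ofReal (dS x (yhat j) ^ 2)
              + ∫⁻ y, JT κ c' U yhat m (j + 1) y ∂(κ x)) + (wE c' xhat yhat j + Ssum))
              (ENNReal.ofReal (c' j)) := by rw [add_add_add_comm]
          _ ≤ _ := min_add_le
    · have hsum : ∑ i ∈ (Finset.Ico j (j + (m + 1))) ∩ U, wE c' xhat yhat i
          = ∑ i ∈ (Finset.Ico (j + 1) (j + (m + 1))) ∩ U, wE c' xhat yhat i := by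
        rw [hins, Finset.insert_inter_of_notMem hj]
      show (if j ∈ U then _ else _) ≤ (if j ∈ U then _ else _) + _
      rw [if_neg hj, if_neg hj]
      exact le_self_add

end OS


namespace OS

variable {κ : S → Measure S} {c' : ℕ → ℝ}

/-- the flagged objective. -/
noncomputable def GTfun (κ : S → Measure S) (c' : ℕ → ℝ) (k N : ℕ) (U : Finset ℕ)
    (xhat : ℕ → S) : ℝ≥0∞ :=
  ∫⁻ y, JT κ c' U xhat (N + 1 - k) k y ∂(κ origin)

lemma GT_modulus (hκ : IsMarkov κ) (hkN : k ≤ N) (U : Finset ℕ) (xhat yhat : ℕ → S) :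
    GTfun κ c' k N U xhat ≤ GTfun κ c' k N U yhat
      + ∑ i ∈ (Finset.Ico k (N + 1)) ∩ U, wE c' xhat yhat i := by
  have hIco : Finset.Ico k (k + (N + 1 - k)) = Finset.Ico k (N + 1) := by congr 1; omega
  have hpt := fun x => JT_modulus (c' := c') hκ U xhat yhat (N + 1 - k) k x
  rw [hIco] at hpt
  calc GTfun κ c' k N U xhat
      ≤ ∫⁻ y, (JT κ c' U yhat (N + 1 - k) k y
          + ∑ i ∈ (Finset.Ico k (N + 1)) ∩ U, wE c' xhat yhat i) ∂(κ origin) :=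
        lintegral_mono hpt
    _ = GTfun κ c' k N U yhat + (∑ i ∈ (Finset.Ico k (N + 1)) ∩ U, wE c' xhat yhat i)
          * (κ origin) Set.univ := by
        rw [lintegral_add_right _ measurable_const, lintegral_const]; rfl
    _ = _ := by have := hκ.1 origin; rw [measure_univ, mul_one]

lemma GT_congr_coords (hκ : IsMarkov κ) (hkN : k ≤ N) (U : Finset ℕ) (xhat yhat : ℕ → S)
    (h : ∀ i ∈ (Finset.Ico k (N + 1)) ∩ U, xhat i = yhat i) :
    GTfun κ c' k N U xhat = GTfun κ c' k N U yhat := by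
  have hz : ∀ (a b : ℕ → S), (∀ i ∈ (Finset.Ico k (N + 1)) ∩ U, a i = b i) →
      ∑ i ∈ (Finset.Ico k (N + 1)) ∩ U, wE c' a b i = 0 := by
    intro a b hab
    apply Finset.sum_eq_zero
    intro i hi
    unfold wE
    rw [hab i hi, dS_self]
    simp
  apply le_antisymm
  · have := GT_modulus (c' := c') hκ hkN U xhat yhat
    rwa [hz _ _ h, add_zero] at this
  · have := GT_modulus (c' := c') hκ hkN U yhat xhat
    rwa [hz _ _ (fun i hi => (h i hi).symm), add_zero] at this

lemma JT_flag_congr (U V : Finset ℕ) (xhat : ℕ → S) (m j : ℕ)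
    (h : ∀ i, j ≤ i → i < j + m → (i ∈ U ↔ i ∈ V)) (x : S) :
    JT κ c' U xhat m j x = JT κ c' V xhat m j x := by
  induction m generalizing j x with
  | zero => rfl
  | succ m ih =>
    have hj : j ∈ U ↔ j ∈ V := h j le_rfl (by omega)
    have hrec : ∀ x, JT κ c' U xhat m (j + 1) x = JT κ c' V xhat m (j + 1) x :=
      fun x => ih (j + 1) (fun i h1 h2 => h i (by omega) (by omega)) x
    show (if j ∈ U then _ else _) = (if j ∈ V then _ else _)
    by_cases hjU : j ∈ U
    · rw [if_pos hjU, if_pos (hj.1 hjU)]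
      congr 2
      exact lintegral_congr hrec
    · rw [if_neg hjU, if_neg (fun hv => hjU (hj.2 hv))]

lemma GT_flag_congr (U V : Finset ℕ) (xhat : ℕ → S)
    (h : ∀ i, k ≤ i → i < N + 1 → (i ∈ U ↔ i ∈ V)) (hkN : k ≤ N) :
    GTfun κ c' k N U xhat = GTfun κ c' k N V xhat := by
  unfold GTfun
  apply lintegral_congr
  intro y
  exact JT_flag_congr U V xhat _ k (fun i h1 h2 => h i h1 (by omega)) y

lemma GT_anti (U V : Finset ℕ) (hUV : U ⊆ V) (xhat : ℕ → S) :
    GTfun κ c' k N V xhat ≤ GTfun κ c' k N U xhat :=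
  lintegral_mono fun y => JT_anti U V hUV xhat _ k y

lemma GT_le_c (hκ : IsMarkov κ) (hkN : k ≤ N) (U : Finset ℕ) (xhat : ℕ → S) :
    GTfun κ c' k N U xhat ≤ ENNReal.ofReal (c' k) := by
  obtain ⟨m, hm⟩ : ∃ m, N + 1 - k = m + 1 := ⟨N - k, by omega⟩
  unfold GTfun
  rw [hm]
  calc (∫⁻ y, JT κ c' U xhat (m + 1) k y ∂(κ origin))
      ≤ ∫⁻ _, ENNReal.ofReal (c' k) ∂(κ origin) := lintegral_mono fun y => JT_le U xhat m k y
    _ = ENNReal.ofReal (c' k) := by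
        have := hκ.1 origin; rw [lintegral_const, measure_univ, mul_one]

/-! ### iterated predicted measures -/

noncomputable def nui (κ : S → Measure S) : ℕ → Measure S
  | 0 => κ origin
  | i + 1 => (nui κ i).bind κ

lemma nui_prob (hκ : IsMarkov κ) (i : ℕ) : IsProbabilityMeasure (nui κ i) := by
  induction i with
  | zero => exact hκ.1 origin
  | succ i ih =>
    constructor
    show ((nui κ i).bind κ) Set.univ = 1
    rw [Measure.bind_apply MeasurableSet.univ (kmeas hκ).aemeasurable]
    have : ∀ x, (κ x) Set.univ = 1 := fun x => (hκ.1 x).measure_univ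
    simp only [this]
    rw [lintegral_one, ih.measure_univ]

lemma lintegral_nui_succ (hκ : IsMarkov κ) {f : S → ℝ≥0∞} (hf : Measurable f) (i : ℕ) :
    ∫⁻ x, f x ∂(nui κ (i + 1)) = ∫⁻ x, (∫⁻ y, f y ∂(κ x)) ∂(nui κ i) :=
  Measure.lintegral_bind (kmeas hκ).aemeasurable hf.aemeasurable

/-! ### the escape penalty -/

noncomputable def Efun (κ : S → Measure S) (c' : ℕ → ℝ) (j₀ : ℕ) (b : S) :
    ℕ → ℕ → S → ℝ≥0∞
  | 0, _, _ => 0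
  | m + 1, j, x =>
      if j = j₀ then
        ({z : S | dS z b < Real.sqrt (c' j₀)}).indicator (fun _ => ENNReal.ofReal (c' j₀)) x
      else ∫⁻ y, Efun κ c' j₀ b m (j + 1) y ∂(κ x)

lemma measurableSet_ball (b : S) (r : ℝ) : MeasurableSet {z : S | dS z b < r} :=
  measurableSet_lt (continuous_dS_left b).measurable measurable_const

lemma measurable_Efun (hκ : IsMarkov κ) (j₀ : ℕ) (b : S) (m j : ℕ) :
    Measurable (Efun κ c' j₀ b m j) := by
  induction m generalizing j with
  | zero => simpa [Efun] using measurable_const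
  | succ m ih =>
    show Measurable fun x => if j = j₀ then _ else _
    by_cases h : j = j₀ <;> simp only [h, if_true, if_false]
    · exact Measurable.indicator measurable_const (measurableSet_ball b _)
    · exact measurable_kint hκ (ih (j + 1))

lemma JT_erase_le (hκ : IsMarkov κ) (U : Finset ℕ) (j₀ : ℕ) (hj₀ : j₀ ∈ U) (xhat : ℕ → S)
    (m j : ℕ) (x : S) :
    JT κ c' (U.erase j₀) xhat m j x
      ≤ JT κ c' U xhat m j x + Efun κ c' j₀ (xhat j₀) m j x := by
  induction m generalizing j x with
  | zero => simp [JT, Efun]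
  | succ m ih =>
    by_cases hj : j = j₀
    · subst hj
      have h1 : j ∉ U.erase j := Finset.notMem_erase _ _
      show (if j ∈ U.erase j then _ else _) ≤ (if j ∈ U then _ else _) + (if j = j then _ else _)
      rw [if_neg h1, if_pos hj₀, if_pos rfl]
      by_cases hx : x ∈ {z : S | dS z (xhat j) < Real.sqrt (c' j)}
      · rw [Set.indicator_of_mem hx]
        exact le_add_self
      · rw [Set.indicator_of_notMem hx]
        have hge : Real.sqrt (c' j) ≤ dS x (xhat j) := not_lt.1 hx
        have hcd : c' j ≤ dS x (xhat j) ^ 2 := by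
          rcases le_or_gt 0 (c' j) with hc | hc
          · nlinarith [Real.sq_sqrt hc, Real.sqrt_nonneg (c' j), dS_nonneg x (xhat j)]
          · nlinarith [dS_nonneg x (xhat j)]
        rw [add_zero, min_eq_right]
        calc ENNReal.ofReal (c' j) ≤ ENNReal.ofReal (dS x (xhat j) ^ 2) :=
            ENNReal.ofReal_le_ofReal hcd
          _ ≤ _ := le_self_add
    · show (if j ∈ U.erase j₀ then _ else _) ≤ (if j ∈ U then _ else _) + (if j = j₀ then _ else _)
      rw [if_neg hj]
      have hmem : j ∈ U.erase j₀ ↔ j ∈ U := by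
        rw [Finset.mem_erase]; exact ⟨fun h => h.2, fun h => ⟨hj, h⟩⟩
      by_cases hjU : j ∈ U
      · rw [if_pos (hmem.2 hjU), if_pos hjU]
        have hI : (∫⁻ y, JT κ c' (U.erase j₀) xhat m (j + 1) y ∂(κ x))
            ≤ (∫⁻ y, JT κ c' U xhat m (j + 1) y ∂(κ x))
              + ∫⁻ y, Efun κ c' j₀ (xhat j₀) m (j + 1) y ∂(κ x) := by
          rw [← lintegral_add_right _ (measurable_Efun hκ j₀ (xhat j₀) m (j + 1))]
          exact lintegral_mono fun y => ih (j + 1) y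
        calc min (ENNReal.ofReal (dS x (xhat j) ^ 2)
              + ∫⁻ y, JT κ c' (U.erase j₀) xhat m (j + 1) y ∂(κ x)) (ENNReal.ofReal (c' j))
            ≤ min ((ENNReal.ofReal (dS x (xhat j) ^ 2)
              + ∫⁻ y, JT κ c' U xhat m (j + 1) y ∂(κ x))
              + ∫⁻ y, Efun κ c' j₀ (xhat j₀) m (j + 1) y ∂(κ x)) (ENNReal.ofReal (c' j)) := by
              apply min_le_min _ le_rfl
              calc ENNReal.ofReal (dS x (xhat j) ^ 2)
                  + ∫⁻ y, JT κ c' (U.erase j₀) xhat m (j + 1) y ∂(κ x)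
                  ≤ ENNReal.ofReal (dS x (xhat j) ^ 2)
                    + ((∫⁻ y, JT κ c' U xhat m (j + 1) y ∂(κ x))
                      + ∫⁻ y, Efun κ c' j₀ (xhat j₀) m (j + 1) y ∂(κ x)) :=
                    add_le_add_right hI _
                _ = _ := by rw [add_assoc]
          _ ≤ _ := min_add_le
      · rw [if_neg (fun h => hjU (hmem.1 h)), if_neg hjU]
        exact le_self_add

lemma lint_Efun (hκ : IsMarkov κ) (j₀ : ℕ) (b : S) (m : ℕ) :
    ∀ j i, j ≤ j₀ → j₀ < j + m →
    ∫⁻ x, Efun κ c' j₀ b m j x ∂(nui κ i)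
      = ENNReal.ofReal (c' j₀) * (nui κ (i + (j₀ - j))) {z : S | dS z b < Real.sqrt (c' j₀)} := by
  induction m with
  | zero => intro j i h1 h2; omega
  | succ m ih =>
    intro j i h1 h2
    by_cases hj : j = j₀
    · subst hj
      have : ∀ x, Efun κ c' j b m.succ j x
          = ({z : S | dS z b < Real.sqrt (c' j)}).indicator
            (fun _ => ENNReal.ofReal (c' j)) x := by
        intro x; show (if j = j then _ else _) = _; rw [if_pos rfl]
      simp only [this]
      rw [lintegral_indicator (measurableSet_ball b _), setLIntegral_const]
      simp
    · have hlt : j < j₀ := lt_of_le_of_ne h1 hj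
      have : ∀ x, Efun κ c' j₀ b m.succ j x = ∫⁻ y, Efun κ c' j₀ b m (j + 1) y ∂(κ x) := by
        intro x; show (if j = j₀ then _ else _) = _; rw [if_neg hj]
      simp only [this]
      rw [← lintegral_nui_succ hκ (measurable_Efun hκ j₀ b m (j + 1)) i]
      rw [ih (j + 1) (i + 1) (by omega) (by omega)]
      rw [show i + 1 + (j₀ - (j + 1)) = i + (j₀ - j) from by omega]

lemma GT_escape (hκ : IsMarkov κ) (hkN : k ≤ N) (U : Finset ℕ) (j₀ : ℕ) (hj₀ : j₀ ∈ U)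
    (hk : k ≤ j₀) (hN : j₀ ≤ N) (xhat : ℕ → S) :
    GTfun κ c' k N (U.erase j₀) xhat ≤ GTfun κ c' k N U xhat
      + ENNReal.ofReal (c' j₀)
        * (nui κ (j₀ - k)) {z : S | dS z (xhat j₀) < Real.sqrt (c' j₀)} := by
  calc GTfun κ c' k N (U.erase j₀) xhat
      ≤ ∫⁻ y, (JT κ c' U xhat (N + 1 - k) k y
          + Efun κ c' j₀ (xhat j₀) (N + 1 - k) k y) ∂(κ origin) :=
        lintegral_mono fun y => JT_erase_le hκ U j₀ hj₀ xhat _ k y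
    _ = GTfun κ c' k N U xhat + ∫⁻ y, Efun κ c' j₀ (xhat j₀) (N + 1 - k) k y ∂(κ origin) := by
        rw [lintegral_add_right _ (measurable_Efun hκ j₀ (xhat j₀) _ k)]; rfl
    _ = _ := by
        have : (κ origin) = nui κ 0 := rfl
        rw [this, lint_Efun hκ j₀ (xhat j₀) (N + 1 - k) k 0 hk (by omega)]
        simp

lemma tail_small (hκ : IsMarkov κ) (i : ℕ) (cc r : ℝ) {δ : ℝ≥0∞} (hδ : 0 < δ) :
    ∃ R : ℝ, 0 ≤ R ∧ ∀ b : S, R < dS origin b →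
      ENNReal.ofReal cc * (nui κ i) {z : S | dS z b < r} < δ := by
  set s : ℕ → Set S := fun n => {x : S | (n : ℝ) ≤ dS origin x} with hs
  have hmeas : ∀ n, MeasurableSet (s n) :=
    fun n => measurableSet_le measurable_const (continuous_dS_right origin).measurable
  have hant : Antitone s := by
    intro a b hab x hx
    simp only [hs, Set.mem_setOf_eq] at hx ⊢
    calc (a : ℝ) ≤ (b : ℝ) := by exact_mod_cast hab
      _ ≤ _ := hx
  have hempty : ⋂ n, s n = ∅ := by
    ext x
    simp only [Set.mem_iInter, Set.mem_empty_iff_false, iff_false, not_forall, hs,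
      Set.mem_setOf_eq, not_le]
    obtain ⟨n, hn⟩ := exists_nat_gt (dS origin x)
    exact ⟨n, hn⟩
  have hprob := nui_prob hκ i
  have htend : Tendsto ((nui κ i) ∘ s) atTop (𝓝 0) := by
    have := tendsto_measure_iInter_atTop (μ := nui κ i)
      (fun n => (hmeas n).nullMeasurableSet) hant ⟨0, measure_ne_top _ _⟩
    rwa [hempty, measure_empty] at this
  have hmul : Tendsto (fun n => ENNReal.ofReal cc * ((nui κ i) (s n))) atTop (𝓝 0) := by
    have := ENNReal.Tendsto.const_mul (a := ENNReal.ofReal cc) htend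
      (Or.inr ENNReal.ofReal_ne_top)
    simpa using this
  have hev := hmul.eventually (gt_mem_nhds hδ)
  obtain ⟨n₀, hn₀⟩ := eventually_atTop.1 hev
  refine ⟨n₀ + max r 0, by positivity, fun b hb => ?_⟩
  have hsub : {z : S | dS z b < r} ⊆ s n₀ := by
    intro z hz
    simp only [Set.mem_setOf_eq] at hz
    simp only [hs, Set.mem_setOf_eq]
    have htri : dS origin b ≤ dS origin z + dS z b := dS_triangle _ _ _
    have hr : r ≤ max r 0 := le_max_left _ _
    linarith
  exact lt_of_le_of_lt (mul_le_mul_right (measure_mono hsub) _) (hn₀ n₀ le_rfl)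

end OS


namespace OS

variable {κ : S → Measure S} {c' : ℕ → ℝ} {k N : ℕ}

lemma exists_min (hκ : IsMarkov κ) (hkN : k ≤ N) (U : Finset ℕ) :
    ∃ xhat : ℕ → S, ∀ yhat : ℕ → S,
      GTfun κ c' k N U xhat ≤ GTfun κ c' k N U yhat := by
  induction U using Finset.strongInduction with
  | _ U IH =>
  by_cases hU : ∃ j₀ ∈ U, (⨅ yhat : ℕ → S, GTfun κ c' k N (U.erase j₀) yhat)
      ≤ ⨅ yhat : ℕ → S, GTfun κ c' k N U yhat
  · obtain ⟨j₀, hj₀, hle⟩ := hU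
    obtain ⟨xh, hxh⟩ := IH (U.erase j₀) (Finset.erase_ssubset hj₀)
    refine ⟨xh, fun yhat => ?_⟩
    calc GTfun κ c' k N U xh ≤ GTfun κ c' k N (U.erase j₀) xh :=
        GT_anti _ _ (Finset.erase_subset _ _) xh
      _ = ⨅ yhat, GTfun κ c' k N (U.erase j₀) yhat :=
        le_antisymm (le_iInf hxh) (iInf_le _ _)
      _ ≤ ⨅ yhat, GTfun κ c' k N U yhat := hle
      _ ≤ GTfun κ c' k N U yhat := iInf_le _ _
  · push_neg at hU
    rcases U.eq_empty_or_nonempty with hUe | hUne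
    · subst hUe
      refine ⟨fun _ => origin, fun yhat => ?_⟩
      have := GT_congr_coords (c' := c') hκ hkN ∅ (fun _ => origin) yhat
        (fun i hi => absurd (Finset.mem_inter.1 hi).2 (Finset.notMem_empty i))
      rw [this]
    have hrange : ∀ j₀ ∈ U, k ≤ j₀ ∧ j₀ ≤ N := by
      intro j₀ hj₀
      by_contra hcon
      have heq : ∀ yhat : ℕ → S,
          GTfun κ c' k N (U.erase j₀) yhat = GTfun κ c' k N U yhat := by
        intro yhat
        apply GT_flag_congr (U.erase j₀) U yhat _ hkN
        intro i h1 h2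
        rw [Finset.mem_erase]
        constructor
        · exact fun h => h.2
        · intro h
          refine ⟨?_, h⟩
          omega
      have hlt := hU j₀ hj₀
      rw [iInf_congr heq] at hlt
      exact lt_irrefl _ hlt
    set m : ℝ≥0∞ := ⨅ yhat : ℕ → S, GTfun κ c' k N U yhat with hm
    have hmle : m ≤ ENNReal.ofReal (c' k) :=
      le_trans (iInf_le _ (fun _ => origin)) (GT_le_c hκ hkN U _)
    have hmtop : m ≠ ⊤ := ne_top_of_le_ne_top ENNReal.ofReal_ne_top hmle
    set eps : ℕ → ℝ≥0∞ :=
      fun j => (⨅ yhat : ℕ → S, GTfun κ c' k N (U.erase j) yhat) - m with heps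
    have hepspos : ∀ j ∈ U, 0 < eps j := fun j hj => tsub_pos_of_lt (hU j hj)
    have hepsm : ∀ j ∈ U, m + eps j = ⨅ yhat : ℕ → S, GTfun κ c' k N (U.erase j) yhat :=
      fun j hj => add_tsub_cancel_of_le (hU j hj).le
    set half : ℕ → ℝ≥0∞ := fun j => eps j / 2 with hhalf
    have hhalfpos : ∀ j ∈ U, 0 < half j := by
      intro j hj
      exact ENNReal.div_pos (hepspos j hj).ne' (by norm_num)
    have hhalves : ∀ j, half j + half j = eps j := fun j => ENNReal.add_halves _
    set δ : ℝ≥0∞ := U.inf' hUne half with hδ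
    have hδpos : 0 < δ := by
      rw [hδ, Finset.lt_inf'_iff]
      exact fun j hj => hhalfpos j hj
    have hδle : ∀ j ∈ U, δ ≤ half j := fun j hj => Finset.inf'_le _ hj
    have hRex : ∀ j : ℕ, ∃ R : ℝ, 0 ≤ R ∧ ∀ b : S, R < dS origin b →
        ENNReal.ofReal (c' j) * (nui κ (j - k)) {z : S | dS z b < Real.sqrt (c' j)} < δ :=
      fun j => tail_small hκ (j - k) (c' j) (Real.sqrt (c' j)) hδpos
    choose Rf hRf0 hRf using hRex
    have hseq : ∀ l : ℕ, ∃ xhat : ℕ → S,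
        GTfun κ c' k N U xhat < m + min δ (((l : ℕ) + 1 : ℝ≥0∞))⁻¹ := by
      intro l
      have hpos : (0 : ℝ≥0∞) < min δ (((l : ℕ) + 1 : ℝ≥0∞))⁻¹ := by
        apply lt_min hδpos
        simp [ENNReal.inv_pos]
      have hlt : (⨅ yhat : ℕ → S, GTfun κ c' k N U yhat)
          < m + min δ (((l : ℕ) + 1 : ℝ≥0∞))⁻¹ := by
        rw [← hm]
        exact ENNReal.lt_add_right hmtop (ne_of_gt hpos)
      exact iInf_lt_iff.1 hlt
    choose xh hxh using hseq
    set xn : ℕ → ℕ → S := fun l j => if j ∈ U then xh l j else origin with hxndef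
    have hGTxn : ∀ l, GTfun κ c' k N U (xn l) = GTfun κ c' k N U (xh l) := by
      intro l
      apply GT_congr_coords (c' := c') hκ hkN U
      intro i hi
      simp only [hxndef]
      rw [if_pos (Finset.mem_inter.1 hi).2]
    have hxn : ∀ l, GTfun κ c' k N U (xn l) < m + min δ (((l : ℕ) + 1 : ℝ≥0∞))⁻¹ := by
      intro l; rw [hGTxn l]; exact hxh l
    have hcoord : ∀ l, ∀ j ∈ U, dS origin (xn l j) ≤ Rf j := by
      intro l j hj
      by_contra hcon
      push_neg at hcon
      have hxnj : xn l j = xh l j := if_pos hj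
      rw [hxnj] at hcon
      have hesc := GT_escape (c' := c') hκ hkN U j hj (hrange j hj).1 (hrange j hj).2 (xh l)
      have hball := hRf j (xh l j) hcon
      have h1 : (⨅ yhat : ℕ → S, GTfun κ c' k N (U.erase j) yhat)
          ≤ GTfun κ c' k N U (xh l) + ENNReal.ofReal (c' j)
            * (nui κ (j - k)) {z : S | dS z (xh l j) < Real.sqrt (c' j)} :=
        le_trans (iInf_le _ (xh l)) hesc
      have h2 : GTfun κ c' k N U (xh l) + ENNReal.ofReal (c' j)
            * (nui κ (j - k)) {z : S | dS z (xh l j) < Real.sqrt (c' j)}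
          < (m + δ) + δ := by
        apply ENNReal.add_lt_add _ hball
        exact lt_of_lt_of_le (hxh l) (add_le_add_right (min_le_left _ _) m)
      have h3 : (m + δ) + δ ≤ (m + half j) + half j :=
        add_le_add (add_le_add_right (hδle j hj) m) (hδle j hj)
      have h4 : (m + half j) + half j = m + eps j := by
        rw [add_assoc, hhalves j]
      have h5 := hepsm j hj
      have hcontra : (⨅ yhat : ℕ → S, GTfun κ c' k N (U.erase j) yhat)
          < ⨅ yhat : ℕ → S, GTfun κ c' k N (U.erase j) yhat :=
        lt_of_le_of_lt h1 (lt_of_lt_of_le h2 (le_trans h3 (le_of_eq (h4.trans h5))))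
      exact lt_irrefl _ hcontra
    set R : ℝ := (U.sup' hUne Rf) ⊔ 0 with hR
    have hR0 : (0 : ℝ) ≤ R := le_sup_right
    have hRle : ∀ j ∈ U, Rf j ≤ R := fun j hj => le_trans (Finset.le_sup' Rf hj) le_sup_left
    set T : Set (ℝ × ℝ × ℝ) := Set.Icc (-R, -R, 0) (R, R, 2 * Real.pi) with hT
    have hTcomp : IsCompact T := isCompact_Icc
    have hmemT : ∀ l j, ump (xn l j) ∈ T := by
      intro l j
      have hbd : ∀ z : S, dS origin z ≤ R → ump z ∈ T := by
        intro z hz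
        have hz1 := abs_le.1 (le_trans (abs_le_dS_origin₁ z) hz)
        have hz2 := abs_le.1 (le_trans (abs_le_dS_origin₂ z) hz)
        have h3 := z.2
        rw [hT, Set.mem_Icc]
        constructor
        · exact ⟨hz1.1, hz2.1, h3.1⟩
        · exact ⟨hz1.2, hz2.2, h3.2.le⟩
      by_cases hj : j ∈ U
      · exact hbd _ (le_trans (hcoord l j hj) (hRle j hj))
      · have hxo : xn l j = origin := if_neg hj
        rw [hxo]
        apply hbd origin
        rw [dS_self]
        exact hR0
    set Cset : Set (ℕ → ℝ × ℝ × ℝ) := Set.pi Set.univ (fun _ => T) with hCset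
    have hC : IsCompact Cset := isCompact_univ_pi fun _ => hTcomp
    set u : ℕ → ℕ → ℝ × ℝ × ℝ := fun l j => ump (xn l j) with hu
    have huC : ∀ l, u l ∈ Cset := by
      intro l
      rw [hCset, Set.mem_univ_pi]
      exact fun j => hmemT l j
    obtain ⟨w, hwC, φ, hφ, hconv⟩ := hC.tendsto_subseq huC
    set xstar : ℕ → S := fun j => pmap (w j) with hxstar
    have hxnl : ∀ l j, xn l j = pmap (u l j) := fun l j => (pmap_ump _).symm
    have hcoordconv : ∀ j, Tendsto (fun l => u (φ l) j) atTop (𝓝 (w j)) :=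
      fun j => ((continuous_apply j).tendsto w).comp hconv
    have hdS : ∀ j, Tendsto (fun l => dS (xstar j) (xn (φ l) j)) atTop (𝓝 0) := by
      intro j
      have hFcont : Continuous fun v : ℝ × ℝ × ℝ =>
          Real.sqrt (((w j).1 - v.1) ^ 2 + ((w j).2.1 - v.2.1) ^ 2
            + 4 * ((w j).2.2 - v.2.2) ^ 2) := by fun_prop
      have hFt : Tendsto (fun l => Real.sqrt (((w j).1 - (u (φ l) j).1) ^ 2
          + ((w j).2.1 - (u (φ l) j).2.1) ^ 2
          + 4 * ((w j).2.2 - (u (φ l) j).2.2) ^ 2)) atTop (𝓝 0) := by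
        have h := (hFcont.tendsto (w j)).comp (hcoordconv j)
        simpa [Function.comp_def] using h
      apply squeeze_zero (fun l => dS_nonneg _ _) _ hFt
      intro l
      rw [hxnl (φ l) j]
      exact dS_pmap_le (w j) (u (φ l) j)
    have hfin : ∀ l, GTfun κ c' k N U xstar
        ≤ (m + min δ (((φ l : ℕ) + 1 : ℝ≥0∞))⁻¹)
          + ∑ i ∈ (Finset.Ico k (N + 1)) ∩ U, wE c' xstar (xn (φ l)) i := by
      intro l
      calc GTfun κ c' k N U xstar
          ≤ GTfun κ c' k N U (xn (φ l))
            + ∑ i ∈ (Finset.Ico k (N + 1)) ∩ U, wE c' xstar (xn (φ l)) i :=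
          GT_modulus hκ hkN U xstar (xn (φ l))
        _ ≤ _ := add_le_add_left (hxn (φ l)).le _
    have hT1 : Tendsto (fun l => m + min δ (((φ l : ℕ) + 1 : ℝ≥0∞))⁻¹) atTop (𝓝 m) := by
      have hup : Tendsto (fun l => φ l + 1) atTop atTop :=
        tendsto_atTop_mono (fun l => le_trans hφ.le_apply (Nat.le_succ _)) tendsto_id
      have hinv : Tendsto (fun l => (((φ l : ℕ) + 1 : ℝ≥0∞))⁻¹) atTop (𝓝 0) := by
        have h := ENNReal.tendsto_inv_nat_nhds_zero.comp hup
        have heq : ∀ l : ℕ, ((φ l + 1 : ℕ) : ℝ≥0∞)⁻¹ = (((φ l : ℕ) + 1 : ℝ≥0∞))⁻¹ := by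
          intro l; push_cast; rfl
        simpa [Function.comp_def, Nat.cast_add, Nat.cast_one] using h
      have hmin : Tendsto (fun l => min δ (((φ l : ℕ) + 1 : ℝ≥0∞))⁻¹) atTop (𝓝 0) :=
        tendsto_of_tendsto_of_tendsto_of_le_of_le tendsto_const_nhds hinv
          (fun l => zero_le) (fun l => min_le_right _ _)
      have h := Tendsto.add (tendsto_const_nhds (x := m)) hmin
      simpa using h
    have hT2 : Tendsto (fun l => ∑ i ∈ (Finset.Ico k (N + 1)) ∩ U,
        wE c' xstar (xn (φ l)) i) atTop (𝓝 0) := by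
      have hterm : ∀ i ∈ (Finset.Ico k (N + 1)) ∩ U,
          Tendsto (fun l => wE c' xstar (xn (φ l)) i) atTop (𝓝 0) := by
        intro i _
        have hreal : Tendsto (fun l => (2 * Real.sqrt (c' i) + dS (xstar i) (xn (φ l) i))
            * dS (xstar i) (xn (φ l) i)) atTop (𝓝 0) := by
          have h := ((tendsto_const_nhds (x := 2 * Real.sqrt (c' i))).add (hdS i)).mul (hdS i)
          simpa using h
        have h := ENNReal.tendsto_ofReal hreal
        simpa [wE] using h
      have hsum := tendsto_finset_sum ((Finset.Ico k (N + 1)) ∩ U) hterm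
      simpa using hsum
    have hle : GTfun κ c' k N U xstar ≤ m := by
      have htot : Tendsto (fun l => (m + min δ (((φ l : ℕ) + 1 : ℝ≥0∞))⁻¹)
          + ∑ i ∈ (Finset.Ico k (N + 1)) ∩ U, wE c' xstar (xn (φ l)) i) atTop (𝓝 m) := by
        have h := hT1.add hT2
        simpa using h
      exact ge_of_tendsto htot (Eventually.of_forall hfin)
    exact ⟨xstar, fun yhat => le_trans hle (iInf_le _ yhat)⟩

end OS


namespace OS

variable {κ : S → Measure S} {c' : ℕ → ℝ} {k N : ℕ}

lemma Jaux_le_Vaux (f : ℕ → S → ℝ≥0∞) (hf : IsPolicy k N f) (xhat : ℕ → S) (m : ℕ) :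
    ∀ j x, j + m = N + 1 → k ≤ j →
      Jaux κ c' xhat m j x ≤ Vaux κ c' xhat f m j x := by
  induction m with
  | zero => intro j x _ _; exact le_rfl
  | succ m ih =>
    intro j x hjm hkj
    have hjN : j ≤ N := by omega
    have hf1 : f j x ≤ 1 := (hf j hkj hjN).2 x
    have hIa : ENNReal.ofReal (dS x (xhat j) ^ 2) + ∫⁻ y, Jaux κ c' xhat m (j + 1) y ∂(κ x)
        ≤ ENNReal.ofReal (dS x (xhat j) ^ 2) + ∫⁻ y, Vaux κ c' xhat f m (j + 1) y ∂(κ x) :=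
      add_le_add_right (lintegral_mono fun y => ih (j + 1) y (by omega) (by omega)) _
    show min (ENNReal.ofReal (dS x (xhat j) ^ 2)
        + ∫⁻ y, Jaux κ c' xhat m (j + 1) y ∂(κ x)) (ENNReal.ofReal (c' j))
      ≤ f j x * (ENNReal.ofReal (dS x (xhat j) ^ 2)
        + ∫⁻ y, Vaux κ c' xhat f m (j + 1) y ∂(κ x)) + (1 - f j x) * ENNReal.ofReal (c' j)
    calc min (ENNReal.ofReal (dS x (xhat j) ^ 2)
          + ∫⁻ y, Jaux κ c' xhat m (j + 1) y ∂(κ x)) (ENNReal.ofReal (c' j))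
        = (f j x + (1 - f j x)) * min (ENNReal.ofReal (dS x (xhat j) ^ 2)
          + ∫⁻ y, Jaux κ c' xhat m (j + 1) y ∂(κ x)) (ENNReal.ofReal (c' j)) := by
          rw [add_tsub_cancel_of_le hf1, one_mul]
      _ = f j x * min (ENNReal.ofReal (dS x (xhat j) ^ 2)
          + ∫⁻ y, Jaux κ c' xhat m (j + 1) y ∂(κ x)) (ENNReal.ofReal (c' j))
          + (1 - f j x) * min (ENNReal.ofReal (dS x (xhat j) ^ 2)
          + ∫⁻ y, Jaux κ c' xhat m (j + 1) y ∂(κ x)) (ENNReal.ofReal (c' j)) := add_mul _ _ _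
      _ ≤ _ := by
          apply add_le_add
          · exact mul_le_mul_right (le_trans (min_le_left _ _) hIa) _
          · exact mul_le_mul_right (min_le_right _ _) _

/-- the optimal (deterministic) policy for estimates `xhat`. -/
noncomputable def fstar (κ : S → Measure S) (c' : ℕ → ℝ) (N : ℕ) (xhat : ℕ → S)
    (j : ℕ) (x : S) : ℝ≥0∞ :=
  if ENNReal.ofReal (dS x (xhat j) ^ 2) + ∫⁻ y, Jaux κ c' xhat (N - j) (j + 1) y ∂(κ x)
      ≤ ENNReal.ofReal (c' j) then 1 else 0

lemma fstar_policy (hκ : IsMarkov κ) (xhat : ℕ → S) : IsPolicy k N (fstar κ c' N xhat) := by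
  intro j _ _
  constructor
  · apply Measurable.ite _ measurable_const measurable_const
    exact measurableSet_le ((measurable_dSsq (xhat j)).add
      (measurable_kint hκ (measurable_Jaux hκ xhat (N - j) (j + 1)))) measurable_const
  · intro x
    unfold fstar
    split <;> simp

lemma Vaux_fstar (xhat : ℕ → S) (m : ℕ) :
    ∀ j x, j + m = N + 1 →
      Vaux κ c' xhat (fstar κ c' N xhat) m j x = Jaux κ c' xhat m j x := by
  induction m with
  | zero => intro j x _; rfl
  | succ m ih =>
    intro j x hjm
    have hNj : N - j = m := by omega
    have hIH : (∫⁻ y, Vaux κ c' xhat (fstar κ c' N xhat) m (j + 1) y ∂(κ x))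
        = ∫⁻ y, Jaux κ c' xhat m (j + 1) y ∂(κ x) :=
      lintegral_congr fun y => ih (j + 1) y (by omega)
    show fstar κ c' N xhat j x * (ENNReal.ofReal (dS x (xhat j) ^ 2)
        + ∫⁻ y, Vaux κ c' xhat (fstar κ c' N xhat) m (j + 1) y ∂(κ x))
        + (1 - fstar κ c' N xhat j x) * ENNReal.ofReal (c' j)
      = min (ENNReal.ofReal (dS x (xhat j) ^ 2)
        + ∫⁻ y, Jaux κ c' xhat m (j + 1) y ∂(κ x)) (ENNReal.ofReal (c' j))
    rw [hIH]
    unfold fstar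
    rw [hNj]
    by_cases hcond : ENNReal.ofReal (dS x (xhat j) ^ 2)
        + (∫⁻ y, Jaux κ c' xhat m (j + 1) y ∂(κ x)) ≤ ENNReal.ofReal (c' j)
    · rw [if_pos hcond, one_mul, tsub_self, zero_mul, add_zero, min_eq_left hcond]
    · rw [if_neg hcond, zero_mul, zero_add, tsub_zero, one_mul,
        min_eq_right (not_le.1 hcond).le]

end OS


/-- Under Assumption 1 and Hypothesis (H), there exists a jointly optimal pair of
a randomized policy and estimates; the estimates can be taken to be a global
minimizer of `G`, and then the optimal cost equals `G(x̂*_{k:N})`. -/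
theorem exists_jointly_optimal (κ : S → Measure S) (hκ : IsMarkov κ)
    (hA : Assumption1 κ)
    (k N : ℕ) (hkN : k ≤ N) (c' : ℕ → ℝ) (hc' : ∀ j, k ≤ j → j ≤ N → 0 < c' j)
    (hH : HypH κ c' k N) :
    ∃ (fstar : ℕ → S → ℝ≥0∞) (xstar : ℕ → S),
      IsPolicy k N fstar ∧
      (∀ (f : ℕ → S → ℝ≥0∞) (xhat : ℕ → S), IsPolicy k N f →
        Cost κ c' k N xstar fstar ≤ Cost κ c' k N xhat f) ∧
      (∀ yhat : ℕ → S, Gtot κ c' k N xstar ≤ Gtot κ c' k N yhat) ∧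
      Cost κ c' k N xstar fstar = Gtot κ c' k N xstar := by
  obtain ⟨xstar, hxstar⟩ := OS.exists_min (c' := c') hκ hkN (Finset.Icc k N)
  have hGtot_eq : ∀ xhat : ℕ → S,
      Gtot κ c' k N xhat = OS.GTfun κ c' k N (Finset.Icc k N) xhat := by
    intro xhat
    show (∫⁻ y, Jaux κ c' xhat (N + 1 - k) k y ∂(κ origin)) = _
    apply lintegral_congr
    intro y
    exact (OS.JT_eq_Jaux (Finset.Icc k N) xhat (N + 1 - k) k
      (fun i h1 h2 => Finset.mem_Icc.2 ⟨h1, by omega⟩) y).symm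
  have hmin : ∀ yhat : ℕ → S, Gtot κ c' k N xstar ≤ Gtot κ c' k N yhat := by
    intro yhat
    rw [hGtot_eq, hGtot_eq]
    exact hxstar yhat
  have hCost_eq : Cost κ c' k N xstar (OS.fstar κ c' N xstar) = Gtot κ c' k N xstar := by
    show (∫⁻ y, Vaux κ c' xstar (OS.fstar κ c' N xstar) (N + 1 - k) k y ∂(κ origin)) = _
    apply lintegral_congr
    intro y
    exact OS.Vaux_fstar xstar (N + 1 - k) k y (by omega)
  have hG_le_Cost : ∀ (f : ℕ → S → ℝ≥0∞) (xhat : ℕ → S), IsPolicy k N f →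
      Gtot κ c' k N xhat ≤ Cost κ c' k N xhat f := by
    intro f xhat hf
    exact lintegral_mono fun y => OS.Jaux_le_Vaux f hf xhat (N + 1 - k) k y (by omega) le_rfl
  refine ⟨OS.fstar κ c' N xstar, xstar, OS.fstar_policy hκ xstar, ?_, hmin, hCost_eq⟩
  intro f xhat hf
  rw [hCost_eq]
  exact le_trans (hmin xhat) (hG_le_Cost f xhat hf)

end
end
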